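/- arXiv:1409.5898 — 5 statements merged into one kernel-verified Lean document; each statement's English description precedes it below -/
import Mathlib

section
/- Let A₁,...,A_d ∈ M_m(ℂ) be positive semidefinite matrices. Then the polynomial q(z, z₁,...,z_d) = det(z·1_m + Σ_{i=1}^d z_i A_i) in d+1 variables has real coefficients and is real stable. -/
open MvPolynomial
open scoped ComplexOrder
open Matrix

private lemma sum_mulVec' {m : ℕ} {ι : Type*} (s : Finset ι)
    (N : ι → Matrix (Fin m) (Fin m) ℂ) (v : Fin m → ℂ) :
    (∑ i ∈ s, N i) *ᵥ v = ∑ i ∈ s, N i *ᵥ v := by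
  ext a
  simp [Matrix.mulVec, dotProduct, Matrix.sum_apply, Finset.sum_apply, Finset.sum_mul]
  rw [Finset.sum_comm]

private lemma dotProduct_sum' {m : ℕ} {ι : Type*} (s : Finset ι)
    (v : Fin m → ℂ) (w : ι → Fin m → ℂ) :
    v ⬝ᵥ (∑ i ∈ s, w i) = ∑ i ∈ s, v ⬝ᵥ w i := by
  simp [dotProduct, Finset.sum_apply, Finset.mul_sum]
  rw [Finset.sum_comm]

/-- For positive semidefinite matrices `A₁, ..., A_d ∈ M_m(ℂ)`, the polynomial
`q(z, z₁, ..., z_d) = det(z·1_m + ∑ᵢ zᵢ Aᵢ)` (variable `0` of `Fin (d+1)` playing the role of `z`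
and variable `i.succ` the role of `zᵢ`) has real coefficients and has no zero in `ℍ^(d+1)`,
i.e. it is real stable. -/
theorem statement0 {m d : ℕ} (A : Fin d → Matrix (Fin m) (Fin m) ℂ)
    (hA : ∀ i, (A i).PosSemidef) :
    (∀ s : (Fin (d + 1)) →₀ ℕ,
      ((Matrix.det (Matrix.of fun a b : Fin m =>
          (if a = b then (X 0 : MvPolynomial (Fin (d + 1)) ℂ) else 0) +
            ∑ i : Fin d, X i.succ * C (A i a b))).coeff s).im = 0) ∧
    (∀ z : Fin (d + 1) → ℂ, (∀ i, 0 < (z i).im) →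
      eval z (Matrix.det (Matrix.of fun a b : Fin m =>
          (if a = b then (X 0 : MvPolynomial (Fin (d + 1)) ℂ) else 0) +
            ∑ i : Fin d, X i.succ * C (A i a b))) ≠ 0) := by
  set P : Matrix (Fin m) (Fin m) (MvPolynomial (Fin (d + 1)) ℂ) :=
    Matrix.of fun a b : Fin m =>
      (if a = b then (X 0 : MvPolynomial (Fin (d + 1)) ℂ) else 0) +
        ∑ i : Fin d, X i.succ * C (A i a b) with hP
  constructor
  · -- real coefficients
    intro s
    have hmap : (MvPolynomial.map (starRingEnd ℂ)) P.det = P.det := by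
      rw [RingHom.map_det]
      have : (MvPolynomial.map (starRingEnd ℂ)).mapMatrix P = P.transpose := by
        ext a b
        simp only [RingHom.mapMatrix_apply, Matrix.map_apply, Matrix.transpose_apply, hP,
          Matrix.of_apply, _root_.map_add, _root_.map_sum, _root_.map_mul, MvPolynomial.map_X, MvPolynomial.map_C,
          apply_ite (MvPolynomial.map (starRingEnd ℂ)), _root_.map_zero]
        have h2 : ∀ i, (starRingEnd ℂ) (A i a b) = A i b a := fun i => (hA i).1.apply b a
        simp only [h2]
        rw [show (if a = b then (X 0 : MvPolynomial (Fin (d + 1)) ℂ) else 0)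
            = (if b = a then X 0 else 0) from if_congr eq_comm rfl rfl]
      rw [this, Matrix.det_transpose]
    have := congrArg (MvPolynomial.coeff s) hmap
    rw [MvPolynomial.coeff_map] at this
    exact Complex.conj_eq_iff_im.mp this
  · -- stability
    intro z hz
    set M : Matrix (Fin m) (Fin m) ℂ := z 0 • 1 + ∑ i : Fin d, z i.succ • A i with hM
    have heval : (eval z) P.det = M.det := by
      rw [RingHom.map_det]
      congr 1
      ext a b
      simp [hP, hM, Matrix.one_apply, Finset.sum_apply, Matrix.sum_apply,
        apply_ite (eval z), mul_ite, mul_one, mul_zero]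
    rw [heval]
    intro hdet
    obtain ⟨v, hv, hMv⟩ := Matrix.exists_mulVec_eq_zero_iff.mpr hdet
    have h0 : star v ⬝ᵥ (M *ᵥ v) = 0 := by rw [hMv, dotProduct_zero]
    have hexp : star v ⬝ᵥ (M *ᵥ v) =
        z 0 * (star v ⬝ᵥ v) + ∑ i : Fin d, z i.succ * (star v ⬝ᵥ (A i *ᵥ v)) := by
      rw [hM, Matrix.add_mulVec, dotProduct_add, Matrix.smul_mulVec,
        Matrix.one_mulVec, dotProduct_smul, sum_mulVec', dotProduct_sum']
      congr 1
      refine Finset.sum_congr rfl fun i _ => ?_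
      rw [Matrix.smul_mulVec, dotProduct_smul, smul_eq_mul]
    -- basic facts
    have hvv : 0 < star v ⬝ᵥ v := by
      rcases lt_or_eq_of_le (dotProduct_star_self_nonneg v) with h | h
      · exact h
      · exact absurd ((dotProduct_star_self_eq_zero).mp h.symm) hv
    have hvvre : 0 < (star v ⬝ᵥ v).re := (Complex.lt_def.mp hvv).1
    have hvvim : (star v ⬝ᵥ v).im = 0 := ((Complex.lt_def.mp hvv).2).symm
    have hAi : ∀ i : Fin d, 0 ≤ (star v ⬝ᵥ (A i *ᵥ v)).re ∧ (star v ⬝ᵥ (A i *ᵥ v)).im = 0 := by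
      intro i
      have := (hA i).dotProduct_mulVec_nonneg v
      exact ⟨(Complex.nonneg_iff.mp this).1, ((Complex.nonneg_iff.mp this).2).symm⟩
    have him := congrArg Complex.im (hexp.symm.trans h0)
    simp only [Complex.add_im, Complex.mul_im, Complex.im_sum, Complex.zero_im,
      hvvim, mul_zero, zero_add] at him
    have hpos : 0 < (z 0).im * (star v ⬝ᵥ v).re +
        ∑ i : Fin d, ((z i.succ).re * (star v ⬝ᵥ (A i *ᵥ v)).im +
          (z i.succ).im * (star v ⬝ᵥ (A i *ᵥ v)).re) := by
      have h1 : 0 < (z 0).im * (star v ⬝ᵥ v).re := mul_pos (hz 0) hvvre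
      have h2 : 0 ≤ ∑ i : Fin d, ((z i.succ).re * (star v ⬝ᵥ (A i *ᵥ v)).im +
          (z i.succ).im * (star v ⬝ᵥ (A i *ᵥ v)).re) := by
        refine Finset.sum_nonneg fun i _ => ?_
        rw [(hAi i).2, mul_zero, zero_add]
        exact mul_nonneg (le_of_lt (hz i.succ)) (hAi i).1
      linarith
    rw [him] at hpos
    exact lt_irrefl 0 hpos
end

section
/- Let p(z₁,...,z_d) be a real stable polynomial and let t ∈ ℝ. Then the polynomial (1 + t·∂_d)p, where ∂_d denotes partial differentiation with respect to the d-th variable, is real stable. -/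
open MvPolynomial

/-- A polynomial with real coefficients in `n` variables is real stable if, viewed over `ℂ`,
it has no zero in `ℍ^n` where `ℍ` is the open upper half-plane. -/
def RealStable {n : ℕ} (p : MvPolynomial (Fin n) ℝ) : Prop :=
  ∀ z : Fin n → ℂ, (∀ i, 0 < (z i).im) →
    eval z (map (algebraMap ℝ ℂ) p) ≠ 0

open Polynomial in
private lemma prod_key (w : ℂ) (hw : 0 < w.im) (m : Multiset ℂ) (hm : ∀ r ∈ m, r.im ≤ 0) :
    Polynomial.eval w (m.map (fun r => Polynomial.X - Polynomial.C r)).prod ≠ 0 ∧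
    (0 < Multiset.card m →
      ((Polynomial.eval w (Polynomial.derivative (m.map (fun r => Polynomial.X - Polynomial.C r)).prod)) /
        Polynomial.eval w (m.map (fun r => Polynomial.X - Polynomial.C r)).prod).im < 0) := by
  induction m using Multiset.induction with
  | empty => simp
  | cons r s ih =>
    obtain ⟨hg, hgim⟩ := ih (fun x hx => hm x (Multiset.mem_cons_of_mem hx))
    have hrim : r.im ≤ 0 := hm r (Multiset.mem_cons_self r s)
    set g := (s.map (fun r => Polynomial.X - Polynomial.C r)).prod with hgdef
    have hwr : w - r ≠ 0 := by
      intro h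
      have : (w - r).im = 0 := by rw [h]; simp
      simp only [Complex.sub_im] at this
      linarith
    have hprod : ((r ::ₘ s).map (fun r => Polynomial.X - Polynomial.C r)).prod
        = (Polynomial.X - Polynomial.C r) * g := by
      rw [Multiset.map_cons, Multiset.prod_cons]
    have hev : Polynomial.eval w (((r ::ₘ s).map (fun r => Polynomial.X - Polynomial.C r)).prod)
        = (w - r) * Polynomial.eval w g := by rw [hprod]; simp
    constructor
    · rw [hev]; exact mul_ne_zero hwr hg
    · intro _
      have hder : Polynomial.derivative (((r ::ₘ s).map (fun r => Polynomial.X - Polynomial.C r)).prod)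
          = g + (Polynomial.X - Polynomial.C r) * Polynomial.derivative g := by
        rw [hprod, Polynomial.derivative_mul]
        simp
      have hratio : Polynomial.eval w (Polynomial.derivative (((r ::ₘ s).map (fun r => Polynomial.X - Polynomial.C r)).prod)) /
          Polynomial.eval w (((r ::ₘ s).map (fun r => Polynomial.X - Polynomial.C r)).prod)
          = (w - r)⁻¹ + Polynomial.eval w (Polynomial.derivative g) / Polynomial.eval w g := by
        rw [hder, hev]
        field_simp
        simp
      rw [hratio, Complex.add_im]
      have h1 : ((w - r)⁻¹).im < 0 := by
        rw [Complex.inv_im]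
        apply div_neg_of_neg_of_pos
        · simp only [Complex.sub_im]; linarith
        · exact Complex.normSq_pos.mpr hwr
      rcases Nat.eq_zero_or_pos (Multiset.card s) with hs | hs
      · have : s = 0 := Multiset.card_eq_zero.mp hs
        subst this
        simp only [hgdef, Multiset.map_zero, Multiset.prod_zero, Polynomial.derivative_one,
          Polynomial.eval_zero, zero_div, Complex.zero_im]
        linarith
      · have := hgim hs
        linarith

open Polynomial in
private lemma uni_key (q : Polynomial ℂ) (hq : q ≠ 0)
    (hroots : ∀ w : ℂ, 0 < w.im → Polynomial.eval w q ≠ 0) (t : ℝ) (w : ℂ) (hw : 0 < w.im) :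
    Polynomial.eval w q + (t : ℂ) * Polynomial.eval w (Polynomial.derivative q) ≠ 0 := by
  have hcard : Multiset.card q.roots = q.natDegree :=
    Polynomial.splits_iff_card_roots.mp (IsAlgClosed.splits q)
  have hfact := Polynomial.C_leadingCoeff_mul_prod_multiset_X_sub_C (p := q) hcard
  have hm : ∀ r ∈ q.roots, r.im ≤ 0 := by
    intro r hr
    by_contra h
    push_neg at h
    exact hroots r h ((Polynomial.isRoot_of_mem_roots hr))
  obtain ⟨hg, hgim⟩ := prod_key w hw q.roots hm
  set g := (q.roots.map (fun r => Polynomial.X - Polynomial.C r)).prod with hgdef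
  have ha : q.leadingCoeff ≠ 0 := Polynomial.leadingCoeff_ne_zero.mpr hq
  have hq' : Polynomial.derivative q = Polynomial.C q.leadingCoeff * Polynomial.derivative g := by
    conv_lhs => rw [← hfact]
    rw [Polynomial.derivative_mul, Polynomial.derivative_C]
    ring
  have hevq : Polynomial.eval w q = q.leadingCoeff * Polynomial.eval w g := by
    conv_lhs => rw [← hfact]; simp
  have hevq' : Polynomial.eval w (Polynomial.derivative q)
      = q.leadingCoeff * Polynomial.eval w (Polynomial.derivative g) := by
    rw [hq']; simp
  rw [hevq, hevq']
  have key : (1 : ℂ) + (t : ℂ) * (Polynomial.eval w (Polynomial.derivative g) / Polynomial.eval w g) ≠ 0 := by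
    rcases Nat.eq_zero_or_pos (Multiset.card q.roots) with hc | hc
    · have : q.roots = 0 := Multiset.card_eq_zero.mp hc
      simp [hgdef, this]
    · have him := hgim hc
      rcases eq_or_ne t 0 with ht | ht
      · simp [ht]
      · intro h
        have : ((1 : ℂ) + (t : ℂ) * (Polynomial.eval w (Polynomial.derivative g) / Polynomial.eval w g)).im = 0 := by
          rw [h]; simp
        rw [Complex.add_im, Complex.mul_im, Complex.one_im, Complex.ofReal_re,
          Complex.ofReal_im] at this
        simp only [zero_mul, add_zero, zero_add] at this
        have : t * (Polynomial.eval w (Polynomial.derivative g) / Polynomial.eval w g).im = 0 := this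
        rcases mul_eq_zero.mp this with h1 | h2
        · exact ht (by exact_mod_cast h1)
        · linarith
  intro h
  apply key
  have : q.leadingCoeff * Polynomial.eval w g *
      ((1 : ℂ) + (t : ℂ) * (Polynomial.eval w (Polynomial.derivative g) / Polynomial.eval w g)) = 0 := by
    rw [mul_add, mul_one]
    rw [← h]
    congr 1
    field_simp
  rcases mul_eq_zero.mp this with h1 | h2
  · exact absurd h1 (mul_ne_zero ha hg)
  · exact h2

private lemma eval_aeval_update {d : ℕ} (z : Fin (d + 1) → ℂ)
    (R : MvPolynomial (Fin (d + 1)) ℂ) (w : ℂ) :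
    Polynomial.eval w
      (aeval (fun i => if i = Fin.last d then Polynomial.X else Polynomial.C (z i)) R)
    = eval (Function.update z (Fin.last d) w) R := by
  induction R using MvPolynomial.induction_on with
  | C a => simp
  | add p q hp hq => simp [hp, hq]
  | mul_X p i hp =>
    simp only [map_mul, aeval_X, Polynomial.eval_mul, hp, eval_mul, eval_X]
    congr 1
    by_cases h : i = Fin.last d
    · subst h; simp
    · simp [h, Function.update_of_ne h]

private lemma aeval_pderiv {d : ℕ} (P : MvPolynomial (Fin (d + 1)) ℂ) (z : Fin (d + 1) → ℂ) :
    Polynomial.derivative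
      (aeval (fun i => if i = Fin.last d then Polynomial.X else Polynomial.C (z i)) P)
    = aeval (fun i => if i = Fin.last d then Polynomial.X else Polynomial.C (z i))
        (pderiv (Fin.last d) P) := by
  induction P using MvPolynomial.induction_on with
  | C a => simp [Polynomial.derivative_C]
  | add p q hp hq => simp [map_add, hp, hq]
  | mul_X p i hp =>
    rw [map_mul, Polynomial.derivative_mul, hp, pderiv_mul, map_add, map_mul, map_mul]
    congr 1
    rw [pderiv_X]
    by_cases h : i = Fin.last d
    · subst h
      simp [Pi.single_eq_same]
    · simp [aeval_X, h, Pi.single_eq_of_ne h, Polynomial.derivative_C]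

/-- if `p` is a real stable polynomial in `d + 1` variables and `t ∈ ℝ`, then
`(1 + t·∂_d)p = p + t·(∂p/∂z_d)` (derivative in the last variable) is real stable. -/
theorem statement2 {d : ℕ} (p : MvPolynomial (Fin (d + 1)) ℝ)
    (hp : RealStable p) (t : ℝ) :
    RealStable (p + C t * (pderiv (Fin.last d)) p) := by
  intro z hz
  set P : MvPolynomial (Fin (d + 1)) ℂ := map (algebraMap ℝ ℂ) p with hP
  set f : Fin (d + 1) → Polynomial ℂ :=
    fun i => if i = Fin.last d then Polynomial.X else Polynomial.C (z i) with hf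
  set Q : Polynomial ℂ := aeval f P with hQ
  have hzupd : Function.update z (Fin.last d) (z (Fin.last d)) = z :=
    Function.update_eq_self _ _
  have hupd : ∀ w : ℂ, 0 < w.im → ∀ i, 0 < ((Function.update z (Fin.last d) w) i).im := by
    intro w hw i
    by_cases h : i = Fin.last d
    · subst h; simpa using hw
    · rw [Function.update_of_ne h]; exact hz i
  have hQroots : ∀ w : ℂ, 0 < w.im → Polynomial.eval w Q ≠ 0 := by
    intro w hw
    rw [hQ, hf, eval_aeval_update]
    exact hp _ (hupd w hw)
  have hQne : Q ≠ 0 := by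
    intro h
    apply hQroots (z (Fin.last d)) (hz _)
    rw [h]; simp
  have hkey := uni_key Q hQne hQroots t (z (Fin.last d)) (hz _)
  have hevP : Polynomial.eval (z (Fin.last d)) Q = eval z P := by
    rw [hQ, hf, eval_aeval_update, hzupd]
  have hevP' : Polynomial.eval (z (Fin.last d)) (Polynomial.derivative Q)
      = eval z (map (algebraMap ℝ ℂ) (pderiv (Fin.last d) p)) := by
    rw [hQ, hf, aeval_pderiv, eval_aeval_update, hzupd, hP, pderiv_map]
  rw [hevP, hevP'] at hkey
  intro hcontra
  apply hkey
  rw [← hcontra, hP]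
  simp only [map_add, map_mul, MvPolynomial.map_C, eval_add, eval_mul, eval_C]
  norm_num [Complex.coe_algebraMap]
end

section
/- Let p(z) and q(z) be two monic polynomials in one variable of the same degree with real coefficients. Suppose that for every t ∈ [0,1] the polynomial (1−t)p + t q has all of its roots real. Then for every t ∈ [0,1], the largest real root of (1−t)p + t q lies in the closed interval [min(ZM(p), ZM(q)), max(ZM(p), ZM(q))]. -/
open Polynomial


lemma multiset_pow_le_prod (s : Multiset ℝ) (c : ℝ) (hc : 0 ≤ c) (h : ∀ x ∈ s, c ≤ x) :
    c ^ Multiset.card s ≤ s.prod := by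
  induction s using Multiset.induction_on with
  | empty => simp
  | cons a s ih =>
    rw [Multiset.card_cons, Multiset.prod_cons, pow_succ]
    have ha : c ≤ a := h a (Multiset.mem_cons_self a s)
    have hs : c ^ Multiset.card s ≤ s.prod := ih (fun x hx => h x (Multiset.mem_cons_of_mem hx))
    calc c ^ Multiset.card s * c ≤ s.prod * a :=
          mul_le_mul hs ha hc (le_trans (pow_nonneg hc _) hs)
      _ = a * s.prod := mul_comm _ _

lemma hyp_lower_bound (f : ℝ[X]) (hf : f.Monic) (m : ℝ)
    (him : ∀ w : ℂ, (f.map (algebraMap ℝ ℂ)).IsRoot w → w.im = 0)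
    (hlt : ∀ x : ℝ, f.IsRoot x → x < m) :
    ∀ x : ℝ, m ≤ x → (x - m) ^ f.natDegree ≤ f.eval x := by
  intro x hx
  set F := f.map (algebraMap ℝ ℂ) with hF
  have hFm : F.Monic := hf.map _
  have hsp : F.Splits := IsAlgClosed.splits F
  have hevalmap : ∀ y : ℝ, F.eval (y : ℂ) = ((f.eval y : ℝ) : ℂ) := by
    intro y
    rw [hF, eval_map]
    have := Polynomial.eval₂_at_apply (algebraMap ℝ ℂ) y (p := f)
    simpa using this
  -- each root of F is real, less than m
  have hroots_re : ∀ w ∈ F.roots, w = ((w.re : ℝ) : ℂ) ∧ w.re < m := by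
    intro w hw
    have hwroot : F.IsRoot w := (Polynomial.mem_roots'.mp hw).2
    have him0 : w.im = 0 := him w hwroot
    have hweq : w = ((w.re : ℝ) : ℂ) := by
      apply Complex.ext <;> simp [him0]
    have : f.IsRoot w.re := by
      have h1 : F.eval ((w.re : ℝ) : ℂ) = 0 := by rw [← hweq]; exact hwroot
      rw [hevalmap] at h1
      exact_mod_cast h1
    exact ⟨hweq, hlt _ this⟩
  have hprod : F = (F.roots.map fun a => X - C a).prod :=
    hsp.eq_prod_roots_of_monic hFm
  have hevalx : ((f.eval x : ℝ) : ℂ) = (F.roots.map fun a => (x : ℂ) - a).prod := by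
    rw [← hevalmap x]
    conv_lhs => rw [hprod]
    rw [Polynomial.eval_multiset_prod, Multiset.map_map]
    congr 1
    apply Multiset.map_congr rfl
    intro a _
    simp
  set sreal : Multiset ℝ := F.roots.map (fun w => x - w.re) with hsreal
  have hmapeq : (F.roots.map fun a => (x : ℂ) - a) = sreal.map (fun y : ℝ => (y : ℂ)) := by
    rw [hsreal, Multiset.map_map]
    apply Multiset.map_congr rfl
    intro a ha
    have := (hroots_re a ha).1
    simp only [Function.comp_apply]
    rw [Complex.ofReal_sub, ← this]
  have hreal : f.eval x = sreal.prod := by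
    have : ((f.eval x : ℝ) : ℂ) = ((sreal.prod : ℝ) : ℂ) := by
      rw [hevalx, hmapeq]
      rw [← Complex.ofRealHom_eq_coe]
      exact (Multiset.prod_hom sreal Complex.ofRealHom).symm ▸ rfl
    exact_mod_cast this
  have hcard : Multiset.card sreal = f.natDegree := by
    rw [hsreal, Multiset.card_map]
    rw [Polynomial.splits_iff_card_roots.mp hsp]
    exact hf.natDegree_map _
  rw [hreal, ← hcard]
  apply multiset_pow_le_prod _ _ (by linarith)
  intro y hy
  rw [hsreal] at hy
  obtain ⟨w, hw, rfl⟩ := Multiset.mem_map.mp hy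
  have := (hroots_re w hw).2
  linarith


section helpers
variable (p q : Polynomial ℝ)

lemma pos_beyond (f : ℝ[X]) (hf : f.Monic) {z : ℝ}
    (hz : IsGreatest {x : ℝ | f.IsRoot x} z) : ∀ x : ℝ, z < x → 0 < f.eval x := by
  intro x hx
  by_contra hle
  push_neg at hle
  have hdeg : 0 < f.degree := by
    rcases Nat.eq_zero_or_pos f.natDegree with h0 | h
    · exfalso
      have h1 : f = 1 := hf.natDegree_eq_zero.mp h0
      have h2 : f.IsRoot z := hz.1
      rw [h1] at h2
      simp [IsRoot] at h2
    · exact natDegree_pos_iff_degree_pos.mp h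
  have htend : Filter.Tendsto (fun y => f.eval y) Filter.atTop Filter.atTop :=
    f.tendsto_atTop_of_leadingCoeff_nonneg hdeg (by rw [hf.leadingCoeff]; norm_num)
  obtain ⟨y, hy⟩ := ((htend.eventually_ge_atTop 1).and (Filter.eventually_ge_atTop x)).exists
  obtain ⟨c, hcmem, hceq⟩ := intermediate_value_Icc hy.2 (f.continuous.continuousOn)
    (Set.mem_Icc.mpr ⟨hle, by linarith [hy.1]⟩)
  have : c ≤ z := hz.2 hceq
  have := hcmem.1
  linarith

lemma combo_eval (t x : ℝ) :
    ((1 - t) • p + t • q).eval x = (1 - t) * p.eval x + t * q.eval x := by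
  simp [smul_eq_mul]

lemma combo_monic (hp : p.Monic) (hq : q.Monic) (hdeg : p.natDegree = q.natDegree) (t : ℝ) :
    ((1 - t) • p + t • q).natDegree = p.natDegree ∧ ((1 - t) • p + t • q).Monic := by
  have hc : ((1 - t) • p + t • q).coeff p.natDegree = 1 := by
    rw [coeff_add, coeff_smul, coeff_smul, hp.coeff_natDegree, hdeg, hq.coeff_natDegree]
    simp [smul_eq_mul]
  have hle : ((1 - t) • p + t • q).natDegree ≤ p.natDegree := by
    refine le_trans (natDegree_add_le _ _) (max_le ?_ ?_)
    · exact le_trans (natDegree_smul_le _ _) le_rfl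
    · exact le_trans (natDegree_smul_le _ _) hdeg.ge
  have heq : ((1 - t) • p + t • q).natDegree = p.natDegree :=
    le_antisymm hle (le_natDegree_of_ne_zero (by rw [hc]; norm_num))
  exact ⟨heq, by rw [Monic, leadingCoeff, heq, hc]⟩

lemma combo_pos (hp : p.Monic) (hq : q.Monic) {zp zq : ℝ}
    (hzp : IsGreatest {x : ℝ | p.IsRoot x} zp) (hzq : IsGreatest {x : ℝ | q.IsRoot x} zq)
    {t x : ℝ} (ht : t ∈ Set.Icc (0:ℝ) 1) (hx1 : zp < x) (hx2 : zq < x) :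
    0 < (1 - t) * p.eval x + t * q.eval x := by
  have hP := pos_beyond p hp hzp x hx1
  have hQ := pos_beyond q hq hzq x hx2
  have h0 := ht.1
  have h1 := ht.2
  nlinarith [mul_nonneg (by linarith : (0:ℝ) ≤ 1 - t) (le_of_lt hP),
    mul_nonneg h0 (le_of_lt hQ), mul_pos hP hQ]

end helpers

lemma exists_nonpos (p q : Polynomial ℝ) (hp : p.Monic) (hq : q.Monic)
    (hdeg : p.natDegree = q.natDegree)
    (hroots : ∀ t : ℝ, t ∈ Set.Icc (0 : ℝ) 1 → ∀ w : ℂ,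
      (Polynomial.map (algebraMap ℝ ℂ) ((1 - t) • p + t • q)).IsRoot w → w.im = 0)
    (zp zq : ℝ)
    (hzp : IsGreatest {x : ℝ | p.IsRoot x} zp)
    (hzq : IsGreatest {x : ℝ | q.IsRoot x} zq) (hle : zp ≤ zq) :
    ∀ t ∈ Set.Icc (0:ℝ) 1, ∃ x ∈ Set.Icc zp zq, (1 - t) * p.eval x + t * q.eval x ≤ 0 := by
  have hn : p.natDegree ≠ 0 := by
    intro h0
    have h1 : p = 1 := hp.natDegree_eq_zero.mp h0
    have h2 : p.IsRoot zp := hzp.1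
    rw [h1] at h2; simp [IsRoot] at h2
  by_contra hcon
  push_neg at hcon
  obtain ⟨t₁, ht₁, hpos₁⟩ := hcon
  -- the closed set A of parameters where the combination is ≤ 0 somewhere on [zp, zq]
  set G : ℝ × ℝ → ℝ := fun z => (1 - z.1) * p.eval z.2 + z.1 * q.eval z.2 with hG
  have hGc : Continuous G := by
    apply Continuous.add
    · exact (continuous_const.sub continuous_fst).mul (p.continuous.comp continuous_snd)
    · exact continuous_fst.mul (q.continuous.comp continuous_snd)
  set K : Set (ℝ × ℝ) := (Set.Icc (0:ℝ) 1 ×ˢ Set.Icc zp zq) ∩ {z | G z ≤ 0} with hK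
  have hKc : IsCompact K :=
    (isCompact_Icc.prod isCompact_Icc).inter_right (isClosed_le hGc continuous_const)
  set A : Set ℝ := Prod.fst '' K with hA
  have hAc : IsClosed A := (hKc.image continuous_fst).isClosed
  set S : Set ℝ := A ∩ Set.Icc t₁ 1 with hS
  have hSc : IsClosed S := hAc.inter isClosed_Icc
  have h1S : (1:ℝ) ∈ S := by
    refine ⟨⟨(1, zq), ⟨⟨Set.mem_Icc.mpr ⟨zero_le_one, le_rfl⟩, Set.mem_Icc.mpr ⟨hle, le_rfl⟩⟩, ?_⟩, rfl⟩,
      Set.mem_Icc.mpr ⟨ht₁.2, le_rfl⟩⟩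
    show G (1, zq) ≤ 0
    have : q.eval zq = 0 := hzq.1
    simp [hG, this]
  have hSbdd : BddBelow S := ⟨t₁, fun u hu => hu.2.1⟩
  set s := sInf S with hs
  have hsS : s ∈ S := hSc.csInf_mem ⟨1, h1S⟩ hSbdd
  obtain ⟨⟨s', x₀⟩, ⟨⟨hs01, hx₀mem⟩, hGneg⟩, hfst⟩ := hsS.1
  simp only at hfst
  subst hfst
  have hs01 : s ∈ Set.Icc (0:ℝ) 1 := hs01
  have hst₁ : t₁ < s := by
    rcases lt_or_eq_of_le hsS.2.1 with h | h
    · exact h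
    · exfalso
      have hx := hpos₁ x₀ hx₀mem
      rw [← h] at hGneg
      exact (not_le.mpr hx) hGneg
  -- positivity on the strip [t₁, s) × [zp, ∞)
  have hB : ∀ t, t₁ ≤ t → t < s → ∀ x, zp ≤ x → 0 < (1 - t) * p.eval x + t * q.eval x := by
    intro t h1 h2 x hxzp
    have ht01 : t ∈ Set.Icc (0:ℝ) 1 := ⟨le_trans ht₁.1 h1, le_trans h2.le hs01.2⟩
    by_cases hxzq : x ≤ zq
    · by_contra hnp
      push_neg at hnp
      have htA : t ∈ A := ⟨(t, x), ⟨⟨ht01, ⟨hxzp, hxzq⟩⟩, hnp⟩, rfl⟩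
      have : s ≤ t := csInf_le hSbdd ⟨htA, ⟨h1, ht01.2⟩⟩
      linarith
    · push_neg at hxzq
      exact combo_pos p q hp hq hzp hzq ht01 (lt_of_le_of_lt hle hxzq) hxzq
  -- lower bound on [t₁, s)
  set n := p.natDegree with hn'
  set c : ℝ := (x₀ - zp) ^ n with hc
  set g : ℝ → ℝ := fun t => (1 - t) * p.eval x₀ + t * q.eval x₀ with hg
  have hgc : Continuous g := by
    apply Continuous.add
    · exact (continuous_const.sub continuous_id).mul continuous_const
    · exact continuous_id.mul continuous_const
  have key : ∀ t ∈ Set.Ico t₁ s, c ≤ g t := by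
    intro t ht
    have ht01 : t ∈ Set.Icc (0:ℝ) 1 := ⟨le_trans ht₁.1 ht.1, le_trans ht.2.le hs01.2⟩
    have hlt : ∀ y : ℝ, ((1 - t) • p + t • q).IsRoot y → y < zp := by
      intro y hy
      by_contra hge
      push_neg at hge
      have := hB t ht.1 ht.2 y hge
      have hy' : (1 - t) * p.eval y + t * q.eval y = 0 := by
        rw [← combo_eval p q t y]; exact hy
      linarith
    have := hyp_lower_bound ((1 - t) • p + t • q) (combo_monic p q hp hq hdeg t).2 zp
      (hroots t ht01) hlt x₀ hx₀mem.1
    rw [(combo_monic p q hp hq hdeg t).1, combo_eval p q t x₀] at this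
    exact this
  have hcs : c ≤ g s := by
    have hsub : Set.Icc t₁ s ⊆ {t | c ≤ g t} := by
      rw [← closure_Ico (ne_of_lt hst₁)]
      exact closure_minimal key (isClosed_le continuous_const hgc)
    exact hsub ⟨hst₁.le, le_rfl⟩
  have hc0 : 0 ≤ c := pow_nonneg (by linarith [hx₀mem.1]) _
  have hgs0 : g s ≤ 0 := hGneg
  have hceq0 : c = 0 := le_antisymm (le_trans hcs hgs0) hc0
  have hx₀zp : x₀ = zp := by
    have h2 : x₀ - zp = 0 := (pow_eq_zero_iff hn).mp hceq0
    linarith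
  -- contradiction via evaluation at zp
  have hpzp : p.eval zp = 0 := hzp.1
  have hgseq : g s = s * q.eval zp := by rw [hg]; simp [hx₀zp, hpzp]
  have hgs_ge : 0 ≤ g s := le_trans hc0 hcs
  have hgs : s * q.eval zp = 0 := by rw [← hgseq]; linarith
  have ht₁pos : 0 < t₁ * q.eval zp := by
    have := hpos₁ zp (Set.mem_Icc.mpr ⟨le_rfl, hle⟩)
    rw [hpzp] at this; linarith
  have hspos : 0 < s := lt_of_le_of_lt ht₁.1 hst₁
  rcases le_or_gt (q.eval zp) 0 with h | h
  · nlinarith [ht₁.1]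
  · nlinarith

lemma statement3_aux (p q : Polynomial ℝ) (hp : p.Monic) (hq : q.Monic)
    (hdeg : p.natDegree = q.natDegree)
    (hroots : ∀ t : ℝ, t ∈ Set.Icc (0 : ℝ) 1 → ∀ w : ℂ,
      (Polynomial.map (algebraMap ℝ ℂ) ((1 - t) • p + t • q)).IsRoot w → w.im = 0)
    (zp zq : ℝ)
    (hzp : IsGreatest {x : ℝ | p.IsRoot x} zp)
    (hzq : IsGreatest {x : ℝ | q.IsRoot x} zq) (hle : zp ≤ zq) :
    ∀ t : ℝ, t ∈ Set.Icc (0 : ℝ) 1 →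
      ∃ zt : ℝ, IsGreatest {x : ℝ | ((1 - t) • p + t • q).IsRoot x} zt ∧
        zt ∈ Set.Icc zp zq := by
  intro t ht
  set f := (1 - t) • p + t • q with hf
  have hfm : f.Monic := (combo_monic p q hp hq hdeg t).2
  have hfd : f.natDegree = p.natDegree := (combo_monic p q hp hq hdeg t).1
  have hn : p.natDegree ≠ 0 := by
    intro h0
    have h1 : p = 1 := hp.natDegree_eq_zero.mp h0
    have h2 : p.IsRoot zp := hzp.1
    rw [h1] at h2; simp [IsRoot] at h2
  -- f has a real root
  have hFne : f.map (algebraMap ℝ ℂ) ≠ 0 :=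
    (Polynomial.map_ne_zero_iff (algebraMap ℝ ℂ).injective).mpr hfm.ne_zero
  have hFdeg : 0 < (f.map (algebraMap ℝ ℂ)).degree := by
    rw [degree_map_eq_of_injective (algebraMap ℝ ℂ).injective]
    apply natDegree_pos_iff_degree_pos.mp
    rw [hfd]
    exact Nat.pos_of_ne_zero hn
  obtain ⟨w, hw⟩ := Complex.exists_root hFdeg
  have hwim : w.im = 0 := hroots t ht w hw
  have hwre : f.IsRoot w.re := by
    have hweq : w = ((w.re : ℝ) : ℂ) := by apply Complex.ext <;> simp [hwim]
    have h1 : (f.map (algebraMap ℝ ℂ)).eval ((w.re : ℝ) : ℂ) = 0 := by rw [← hweq]; exact hw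
    rw [eval_map] at h1
    have h2 := Polynomial.eval₂_at_apply (algebraMap ℝ ℂ) w.re (p := f)
    simp only [Complex.coe_algebraMap] at h2
    rw [h2] at h1
    exact_mod_cast h1
  -- finite nonempty set of roots, take the max
  have hfin : {x : ℝ | f.IsRoot x}.Finite := f.finite_setOf_isRoot hfm.ne_zero
  have hne : hfin.toFinset.Nonempty := ⟨w.re, hfin.mem_toFinset.mpr hwre⟩
  set zt := hfin.toFinset.max' hne with hzt
  have hgr : IsGreatest {x : ℝ | f.IsRoot x} zt :=
    ⟨hfin.mem_toFinset.mp (hfin.toFinset.max'_mem hne),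
     fun b hb => hfin.toFinset.le_max' b (hfin.mem_toFinset.mpr hb)⟩
  refine ⟨zt, hgr, ?_, ?_⟩
  · -- lower bound
    obtain ⟨x₀, hx₀mem, hx₀⟩ := exists_nonpos p q hp hq hdeg hroots zp zq hzp hzq hle t ht
    by_contra hlt
    push_neg at hlt
    have hall : ∀ y : ℝ, f.IsRoot y → y < zp := fun y hy => lt_of_le_of_lt (hgr.2 hy) hlt
    have hbd := hyp_lower_bound f hfm zp (hroots t ht) hall x₀ hx₀mem.1
    rw [combo_eval p q t x₀] at hbd
    have h0 : (0:ℝ) ≤ (x₀ - zp) ^ f.natDegree := pow_nonneg (by linarith [hx₀mem.1]) _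
    have heq0 : (1 - t) * p.eval x₀ + t * q.eval x₀ = 0 := le_antisymm hx₀ (le_trans h0 hbd)
    have hroot : f.IsRoot x₀ := by
      rw [IsRoot, combo_eval p q t x₀]; exact heq0
    have := hall x₀ hroot
    linarith [hx₀mem.1]
  · -- upper bound
    by_contra hgt
    push_neg at hgt
    have hroot : f.IsRoot zt := hgr.1
    have hpos := combo_pos p q hp hq hzp hzq ht (lt_of_le_of_lt hle hgt) hgt
    rw [IsRoot, combo_eval p q t zt] at hroot
    linarith

/-- let `p, q` be monic real polynomials of the same degree such that every convex
combination `(1-t)p + tq`, `t ∈ [0,1]`, has all its (complex) roots real.  If `zp` (resp. `zq`)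
is the largest real root of `p` (resp. `q`), then for every `t ∈ [0,1]` the polynomial
`(1-t)p + tq` has a largest real root, and it lies in `[min zp zq, max zp zq]`. -/
theorem statement3 (p q : Polynomial ℝ) (hp : p.Monic) (hq : q.Monic)
    (hdeg : p.natDegree = q.natDegree)
    (hroots : ∀ t : ℝ, t ∈ Set.Icc (0 : ℝ) 1 → ∀ w : ℂ,
      (Polynomial.map (algebraMap ℝ ℂ) ((1 - t) • p + t • q)).IsRoot w → w.im = 0)
    (zp zq : ℝ)
    (hzp : IsGreatest {x : ℝ | p.IsRoot x} zp)
    (hzq : IsGreatest {x : ℝ | q.IsRoot x} zq) :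
    ∀ t : ℝ, t ∈ Set.Icc (0 : ℝ) 1 →
      ∃ zt : ℝ, IsGreatest {x : ℝ | ((1 - t) • p + t • q).IsRoot x} zt ∧
        zt ∈ Set.Icc (min zp zq) (max zp zq) := by
  intro t ht
  rcases le_total zp zq with h | h
  · obtain ⟨zt, hgr, hmem⟩ := statement3_aux p q hp hq hdeg hroots zp zq hzp hzq h t ht
    exact ⟨zt, hgr, by rwa [min_eq_left h, max_eq_right h]⟩
  · have hroots' : ∀ t' : ℝ, t' ∈ Set.Icc (0 : ℝ) 1 → ∀ w : ℂ,
        (Polynomial.map (algebraMap ℝ ℂ) ((1 - t') • q + t' • p)).IsRoot w → w.im = 0 := by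
      intro t' ht' w hw
      apply hroots (1 - t') ⟨by linarith [ht'.2], by linarith [ht'.1]⟩ w
      have hpoly : (1 - (1 - t')) • p + (1 - t') • q = (1 - t') • q + t' • p := by
        rw [sub_sub_cancel, add_comm]
      rwa [hpoly]
    obtain ⟨zt, hgr, hmem⟩ := statement3_aux q p hq hp hdeg.symm hroots' zq zp hzq hzp h
      (1 - t) ⟨by linarith [ht.2], by linarith [ht.1]⟩
    have hpoly : (1 - (1 - t)) • q + (1 - t) • p = (1 - t) • p + t • q := by
      rw [sub_sub_cancel, add_comm]
    rw [hpoly] at hgr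
    exact ⟨zt, hgr, by rwa [min_eq_right h, max_eq_left h]⟩
end

section
/- Let A₁,...,A_d ∈ M_m(ℂ) be matrices of rank 1 and let A = Σ_{i=1}^d A_i. Then the characteristic polynomial of A equals the mixed characteristic polynomial: p_A(z) = μ[A₁,...,A_d](z). -/
open MvPolynomial

/-- The mixed characteristic polynomial
`μ[A₁,...,A_d](z) = (∏_{i=1}^d (1 - ∂_{z_i})) det(z·1_m + ∑_i z_i A_i) |_{z₁ = ⋯ = z_d = 0}`.
We work with polynomials in the variables `z₁, ..., z_d` whose coefficients are polynomials in
`z` (so `z` is `Polynomial.X` of the coefficient ring). -/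
noncomputable def mixedCharPoly {m d : ℕ} (A : Fin d → Matrix (Fin m) (Fin m) ℂ) :
    Polynomial ℂ :=
  eval (fun _ : Fin d => (0 : Polynomial ℂ))
    ((((List.ofFn fun i : Fin d =>
        (1 : Module.End (Polynomial ℂ) (MvPolynomial (Fin d) (Polynomial ℂ))) -
          (pderiv i).toLinearMap).prod :
        Module.End (Polynomial ℂ) (MvPolynomial (Fin d) (Polynomial ℂ))))
      (Matrix.det (Matrix.of fun a b : Fin m =>
        (if a = b then (C Polynomial.X : MvPolynomial (Fin d) (Polynomial ℂ)) else 0) +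
          ∑ i : Fin d, X i * C (Polynomial.C (A i a b)))))

open Matrix in


-- L2: rank-one factorization
lemma rank_one_fact {m : ℕ} (A : Matrix (Fin m) (Fin m) ℂ) (h : A.rank = 1) :
    ∃ u v : Fin m → ℂ, A = vecMulVec u v := by
  rw [Matrix.rank] at h
  obtain ⟨w, -, hw⟩ := (finrank_eq_one_iff' (K := ℂ)
    (V := LinearMap.range A.mulVecLin)).mp h
  refine ⟨w.1, fun b => Classical.choose (hw ⟨A *ᵥ Pi.single b 1,
    LinearMap.mem_range.mpr ⟨Pi.single b 1, rfl⟩⟩), ?_⟩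
  ext a b
  have hc := Classical.choose_spec (hw ⟨A *ᵥ Pi.single b 1,
    LinearMap.mem_range.mpr ⟨Pi.single b 1, rfl⟩⟩)
  have := congrFun (congrArg Subtype.val hc) a
  simp only [Submodule.coe_smul, Pi.smul_apply, smul_eq_mul] at this
  rw [vecMulVec_apply, mul_comm, this, Matrix.mulVec_single]; simp
open MvPolynomial

variable {R : Type*} [CommRing R] {d : ℕ}
open MvPolynomial

variable {R : Type*} [CommRing R] {d : ℕ}

-- L4: determinant of a matrix with entries in a subalgebra lies in the subalgebra
lemma det_mem_subalgebra {m : ℕ} {S : Type*} [CommRing S] [Algebra R S]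
    (T : Subalgebra R S) (M : Matrix (Fin m) (Fin m) S) (h : ∀ a b, M a b ∈ T) :
    M.det ∈ T := by
  classical
  rw [Matrix.det_apply]
  refine Subalgebra.sum_mem _ fun σ _ => ?_
  refine Subalgebra.zsmul_mem _ (Subalgebra.prod_mem _ fun i _ => h _ _) _

-- L0: pderiv preserves supported
lemma pderiv_mem_supported {s : Set (Fin d)} {p : MvPolynomial (Fin d) R}
    (hp : p ∈ supported R s) (j : Fin d) : pderiv j p ∈ supported R s := by
  rw [supported_eq_adjoin_X] at hp ⊢
  induction hp using Algebra.adjoin_induction with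
  | mem x hx => 
      obtain ⟨i, -, rfl⟩ := hx
      classical
      rw [pderiv_X]
      by_cases h : i = j
      · subst h; rw [Pi.single_eq_same]; exact Subalgebra.one_mem _
      · rw [Pi.single_eq_of_ne h]; exact Subalgebra.zero_mem _
  | algebraMap r => rw [show (algebraMap R (MvPolynomial (Fin d) R)) r = C r from rfl, pderiv_C]; exact Subalgebra.zero_mem _
  | add x y hx hy ihx ihy => rw [map_add]; exact Subalgebra.add_mem _ ihx ihy
  | mul x y hx hy ihx ihy =>
      rw [pderiv_mul]
      exact Subalgebra.add_mem _ (Subalgebra.mul_mem _ ihx hy) (Subalgebra.mul_mem _ hx ihy)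

-- L1: eval only depends on values at variables
lemma eval_congr_vars {g₁ g₂ : Fin d → R} {p : MvPolynomial (Fin d) R}
    (h : ∀ j ∈ p.vars, g₁ j = g₂ j) : eval g₁ p = eval g₂ p := by
  have := eval₂Hom_congr' (f₁ := RingHom.id R) (f₂ := RingHom.id R)
    (g₁ := g₁) (g₂ := g₂) (p₁ := p) (p₂ := p) rfl (fun i hi _ => h i hi) rfl
  simpa using this


noncomputable def Topr (R : Type*) [CommRing R] {d : ℕ} (i : Fin d) :
    Module.End R (MvPolynomial (Fin d) R) :=
  (1 : Module.End R (MvPolynomial (Fin d) R)) - (pderiv i).toLinearMap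

def Aff (R : Type*) [CommRing R] {d : ℕ} :
    List (Fin d) → MvPolynomial (Fin d) R → Prop
  | [], _ => True
  | i :: L, p => ∃ q r : MvPolynomial (Fin d) R,
      q ∈ supported R ({i}ᶜ : Set (Fin d)) ∧ r ∈ supported R ({i}ᶜ : Set (Fin d)) ∧
      Aff R L q ∧ Aff R L r ∧ p = q + X i * r

lemma Aff_zero : ∀ (L : List (Fin d)), Aff R L (0 : MvPolynomial (Fin d) R)
  | [] => trivial
  | i :: L => ⟨0, 0, Subalgebra.zero_mem _, Subalgebra.zero_mem _,
      Aff_zero L, Aff_zero L, by ring⟩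

lemma Aff_add : ∀ (L : List (Fin d)) {p q : MvPolynomial (Fin d) R},
    Aff R L p → Aff R L q → Aff R L (p + q)
  | [], _, _, _, _ => trivial
  | i :: L, p, q, ⟨p₁, p₂, hp₁, hp₂, ap₁, ap₂, hp⟩, ⟨q₁, q₂, hq₁, hq₂, aq₁, aq₂, hq⟩ =>
    ⟨p₁ + q₁, p₂ + q₂, Subalgebra.add_mem _ hp₁ hq₁, Subalgebra.add_mem _ hp₂ hq₂,
      Aff_add L ap₁ aq₁, Aff_add L ap₂ aq₂, by rw [hp, hq]; ring⟩

lemma Aff_C_mul : ∀ (L : List (Fin d)) {p : MvPolynomial (Fin d) R} (c : R),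
    Aff R L p → Aff R L (C c * p)
  | [], _, _, _ => trivial
  | i :: L, p, c, ⟨p₁, p₂, hp₁, hp₂, ap₁, ap₂, hp⟩ =>
    ⟨C c * p₁, C c * p₂,
      Subalgebra.mul_mem _ (by rw [← MvPolynomial.algebraMap_eq]; exact Subalgebra.algebraMap_mem _ _) hp₁,
      Subalgebra.mul_mem _ (by rw [← MvPolynomial.algebraMap_eq]; exact Subalgebra.algebraMap_mem _ _) hp₂,
      Aff_C_mul L c ap₁, Aff_C_mul L c ap₂, by rw [hp]; ring⟩

lemma Aff_sum {ι : Type*} (L : List (Fin d)) (s : Finset ι)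
    (f : ι → MvPolynomial (Fin d) R) (h : ∀ a ∈ s, Aff R L (f a)) :
    Aff R L (∑ a ∈ s, f a) := by
  classical
  induction s using Finset.induction_on with
  | empty => simpa using Aff_zero L
  | insert _ _ hni ih =>
      rw [Finset.sum_insert hni]
      exact Aff_add L (h _ (Finset.mem_insert_self _ _))
        (ih fun a ha => h a (Finset.mem_insert_of_mem ha))

lemma prodTop_mem_supported {s : Set (Fin d)} :
    ∀ (L : List (Fin d)) {p : MvPolynomial (Fin d) R} (_ : p ∈ supported R s),
      ((L.map (Topr R)).prod) p ∈ supported R s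
  | [], p, hp => by simpa using hp
  | i :: L, p, hp => by
      rw [List.map_cons, List.prod_cons, Module.End.mul_apply]
      have h1 := prodTop_mem_supported L hp
      rw [Topr, LinearMap.sub_apply, Module.End.one_apply]
      exact Subalgebra.sub_mem _ h1 (pderiv_mem_supported h1 i)

lemma prodTop_X_mul {i : Fin d} :
    ∀ (L : List (Fin d)) (_ : i ∉ L) (r : MvPolynomial (Fin d) R),
      ((L.map (Topr R)).prod) (X i * r) = X i * ((L.map (Topr R)).prod) r
  | [], _, r => by simp
  | j :: L, hL, r => by
      have hij : j ≠ i := fun h => hL (h ▸ List.mem_cons_self)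
      rw [List.map_cons, List.prod_cons, Module.End.mul_apply, Module.End.mul_apply,
        prodTop_X_mul L (fun h => hL (List.mem_cons_of_mem _ h)) r]
      rw [Topr, LinearMap.sub_apply, LinearMap.sub_apply, Module.End.one_apply,
        Module.End.one_apply]
      rw [show ((pderiv j).toLinearMap : MvPolynomial (Fin d) R →ₗ[R] _) (X i * (List.map (Topr R) L).prod r) = pderiv j (X i * (List.map (Topr R) L).prod r) from rfl]
      rw [pderiv_mul, pderiv_X_of_ne (Ne.symm hij)]
      rw [show ((pderiv j).toLinearMap : MvPolynomial (Fin d) R →ₗ[R] _) ((List.map (Topr R) L).prod r) = pderiv j ((List.map (Topr R) L).prod r) from rfl]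
      ring

lemma key_eval (g : Fin d → R) :
    ∀ (L : List (Fin d)) (_ : L.Nodup) (p : MvPolynomial (Fin d) R) (_ : Aff R L p),
      eval g (((L.map (Topr R)).prod) p)
        = eval (fun j => if j ∈ L then g j - 1 else g j) p
  | [], _, p, _ => by simp
  | i :: L, hnd, p, ⟨q, r, hq, hr, aq, ar, hp⟩ => by
      have hiL : i ∉ L := (List.nodup_cons.mp hnd).1
      have hndL : L.Nodup := (List.nodup_cons.mp hnd).2
      subst hp
      rw [List.map_cons, List.prod_cons, Module.End.mul_apply, map_add, prodTop_X_mul L hiL]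
      set Op := ((L.map (Topr R)).prod) with hOp
      have hOq : Op q ∈ supported R ({i}ᶜ : Set (Fin d)) := prodTop_mem_supported L hq
      have hOr : Op r ∈ supported R ({i}ᶜ : Set (Fin d)) := prodTop_mem_supported L hr
      have hdq : pderiv i (Op q) = 0 := pderiv_eq_zero_of_notMem_vars (by
        intro hv; exact (mem_supported.mp hOq hv) rfl)
      have hdr : pderiv i (Op r) = 0 := pderiv_eq_zero_of_notMem_vars (by
        intro hv; exact (mem_supported.mp hOr hv) rfl)
      have hT : (Topr R i) (Op q + X i * Op r) = Op q + (X i - 1) * Op r := by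
        rw [Topr, LinearMap.sub_apply, Module.End.one_apply]
        rw [show ((pderiv i).toLinearMap : MvPolynomial (Fin d) R →ₗ[R] _) (Op q + X i * Op r) = pderiv i (Op q + X i * Op r) from rfl]
        rw [map_add, hdq, pderiv_mul, hdr, pderiv_X, Pi.single_eq_same]
        ring
      rw [hT, map_add, map_mul, map_sub, map_one, eval_X]
      have IHq := key_eval g L hndL q aq
      have IHr := key_eval g L hndL r ar
      rw [IHq, IHr]
      have hgq : eval (fun j => if j ∈ L then g j - 1 else g j) q
          = eval (fun j => if j ∈ i :: L then g j - 1 else g j) q := by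
        apply eval_congr_vars
        intro j hj
        have hji : j ≠ i := fun h => (mem_supported.mp hq (h ▸ hj)) rfl
        simp [List.mem_cons, hji]
      have hgr : eval (fun j => if j ∈ L then g j - 1 else g j) r
          = eval (fun j => if j ∈ i :: L then g j - 1 else g j) r := by
        apply eval_congr_vars
        intro j hj
        have hji : j ≠ i := fun h => (mem_supported.mp hr (h ▸ hj)) rfl
        simp [List.mem_cons, hji]
      rw [hgq, hgr, map_add, map_mul, eval_X]
      simp only [List.mem_cons, true_or, if_pos]
open Matrix

variable {R : Type*} [CommRing R] {m : ℕ}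

-- L3: matrix determinant affine in rank-one perturbation
lemma det_add_smul_vecMulVec (N : Matrix (Fin m) (Fin m) R) (u v : Fin m → R) (x : R) :
    (N + x • vecMulVec u v).det
      = N.det + x * ∑ a, u a * (N.updateRow a v).det := by
  classical
  set F := (detRowAlternating : (Fin m → R) [⋀^Fin m]→ₗ[R] R).toMultilinearMap with hF
  set mfun : Fin m → Fin m → R := fun a => (x * u a) • v with hmfun
  set Nf : Fin m → Fin m → R := fun a => N a with hNf
  have hdet : (N + x • vecMulVec u v).det = F (mfun + Nf) := by
    have : (N + x • vecMulVec u v) = Matrix.of (mfun + Nf) := by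
      ext a b
      simp only [Matrix.add_apply, Matrix.smul_apply, vecMulVec_apply, Matrix.of_apply,
        Pi.add_apply, Pi.smul_apply, smul_eq_mul, hmfun, hNf]
      ring
    rw [this]; rfl
  rw [hdet, F.map_add_univ]
  have hzero : ∀ s : Finset (Fin m), 1 < s.card → F (s.piecewise mfun Nf) = 0 := by
    intro s hs
    obtain ⟨a, ha, b, hb, hab⟩ := Finset.one_lt_card.mp hs
    have hb' : F (s.piecewise (fun _ => v) Nf) = 0 := by
      refine AlternatingMap.map_eq_zero_of_eq _ _ ?_ hab
      simp [Finset.piecewise_eq_of_mem _ _ _ ha, Finset.piecewise_eq_of_mem _ _ _ hb]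
    have heq : s.piecewise mfun Nf
        = s.piecewise (fun a => (x * u a) • (s.piecewise (fun _ => v) Nf) a)
            (s.piecewise (fun _ => v) Nf) := by
      ext c d
      by_cases hc : c ∈ s <;>
        simp [hc, Finset.piecewise_eq_of_mem, Finset.piecewise_eq_of_notMem, hmfun]
    rw [heq, F.map_piecewise_smul, hb', smul_zero]
  rw [← Finset.sum_filter_add_sum_filter_not Finset.univ (fun s => s.card ≤ 1)]
  have h2 : ∑ s ∈ Finset.univ.filter (fun s : Finset (Fin m) => ¬ s.card ≤ 1),
      F (s.piecewise mfun Nf) = 0 := by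
    refine Finset.sum_eq_zero fun s hs => ?_
    exact hzero s (by simpa using (Finset.mem_filter.mp hs).2)
  rw [h2, add_zero]
  have hfilter : Finset.univ.filter (fun s : Finset (Fin m) => s.card ≤ 1)
      = insert (∅ : Finset (Fin m)) (Finset.univ.image fun a : Fin m => {a}) := by
    ext s
    simp only [Finset.mem_filter, Finset.mem_univ, true_and, Finset.mem_insert,
      Finset.mem_image]
    rw [Nat.le_one_iff_eq_zero_or_eq_one, Finset.card_eq_zero, Finset.card_eq_one]
    aesop
  rw [hfilter, Finset.sum_insert (by simp), Finset.sum_image (fun a _ b _ h => Finset.singleton_injective h)]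
  have hempty : F ((∅ : Finset (Fin m)).piecewise mfun Nf) = N.det := by
    rw [Finset.piecewise_empty]; rfl
  have hsingle : ∀ a : Fin m, F (({a} : Finset (Fin m)).piecewise mfun Nf)
      = x * u a * (N.updateRow a v).det := by
    intro a
    rw [Finset.piecewise_singleton]
    have : Function.update Nf a (mfun a) = (N.updateRow a ((x * u a) • v) : Fin m → Fin m → R) := by
      rfl
    rw [this]
    have := N.det_updateRow_smul a (x * u a) v
    exact this
  rw [hempty]
  rw [Finset.sum_congr rfl fun a _ => hsingle a]
  rw [Finset.mul_sum]
  ring_nf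
lemma detAff [Nontrivial R] {m : ℕ} (u v : Fin d → Fin m → R) :
    ∀ (L : List (Fin d)) (_ : L.Nodup)
      (B : Matrix (Fin m) (Fin m) (MvPolynomial (Fin d) R))
      (_ : ∀ a b, B a b ∈ supported R ((↑L.toFinset : Set (Fin d))ᶜ)),
      Aff R L (Matrix.det (B + ∑ i ∈ L.toFinset,
        (X i : MvPolynomial (Fin d) R) • Matrix.vecMulVec (fun a => C (u i a)) (fun b => C (v i b))))
  | [], _, B, hB => trivial
  | i :: L, hnd, B, hB => by
    classical
    have hiL : i ∉ L := (List.nodup_cons.mp hnd).1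
    have hndL : L.Nodup := (List.nodup_cons.mp hnd).2
    have hiF : i ∉ L.toFinset := fun h => hiL (List.mem_toFinset.mp h)
    set V : Fin d → Matrix (Fin m) (Fin m) (MvPolynomial (Fin d) R) :=
      fun j => Matrix.vecMulVec (fun a => C (u j a)) (fun b => C (v j b)) with hV
    set N : Matrix (Fin m) (Fin m) (MvPolynomial (Fin d) R) :=
      B + ∑ j ∈ L.toFinset, (X j : MvPolynomial (Fin d) R) • V j with hN
    have hM : B + ∑ j ∈ (i :: L).toFinset, (X j : MvPolynomial (Fin d) R) • V j = N + (X i : MvPolynomial (Fin d) R) • V i := by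
      rw [List.toFinset_cons, Finset.sum_insert hiF, hN]
      abel
    have hdet := det_add_smul_vecMulVec N (fun a => C (u i a)) (fun b => C (v i b)) (X i)
    -- memberships
    have hconst : ∀ (c : R) (s : Set (Fin d)), (C c : MvPolynomial (Fin d) R) ∈ supported R s := by
      intro c s
      rw [← MvPolynomial.algebraMap_eq]
      exact Subalgebra.algebraMap_mem _ _
    have hsub : ((↑(i :: L).toFinset : Set (Fin d))ᶜ : Set (Fin d)) ⊆ ({i}ᶜ : Set (Fin d)) := by
      intro x hx
      simp only [List.toFinset_cons, Finset.coe_insert, Set.mem_compl_iff,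
        Set.mem_insert_iff, not_or] at hx
      simp [hx.1]
    have hNmem : ∀ a b, N a b ∈ supported R ({i}ᶜ : Set (Fin d)) := by
      intro a b
      rw [hN]
      refine Subalgebra.add_mem _ (supported_mono hsub (hB a b)) ?_
      rw [Matrix.sum_apply]
      refine Subalgebra.sum_mem _ fun j hj => ?_
      have hji : j ≠ i := fun h => hiF (h ▸ hj)
      rw [Matrix.smul_apply, smul_eq_mul]
      exact Subalgebra.mul_mem _
        ((X_mem_supported (R := R)).mpr (by simp [hji])) (by
          simp only [hV, Matrix.vecMulVec_apply]
          exact Subalgebra.mul_mem _ (hconst _ _) (hconst _ _))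
    have hUmem : ∀ (a : Fin m) a' b, (N.updateRow a fun b => C (v i b)) a' b
        ∈ supported R ({i}ᶜ : Set (Fin d)) := by
      intro a a' b
      rw [Matrix.updateRow_apply]
      split_ifs
      · exact hconst _ _
      · exact hNmem a' b
    -- Aff L for the two pieces
    have hsub' : ((↑(i :: L).toFinset : Set (Fin d))ᶜ : Set (Fin d))
        ⊆ ((↑L.toFinset : Set (Fin d))ᶜ : Set (Fin d)) := by
      intro x hx
      simp only [List.toFinset_cons, Finset.coe_insert, Set.mem_compl_iff,
        Set.mem_insert_iff, not_or] at hx ⊢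
      exact fun h => hx.2 h
    have affq : Aff R L N.det := by
      have := detAff u v L hndL B (fun a b => supported_mono hsub' (hB a b))
      rwa [← hN] at this
    have affr : ∀ a : Fin m, Aff R L (N.updateRow a fun b => C (v i b)).det := by
      intro a
      have hrow : N.updateRow a (fun b => C (v i b))
          = B.updateRow a (fun b => C (v i b)) + ∑ j ∈ L.toFinset,
              (X j : MvPolynomial (Fin d) R) • Matrix.vecMulVec (fun a' => C (Function.update (u j) a 0 a'))
                (fun b => C (v j b)) := by
        ext a' b
        rw [Matrix.updateRow_apply, Matrix.add_apply, Matrix.updateRow_apply]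
        by_cases ha' : a' = a
        · subst ha'
          simp [Matrix.sum_apply, Matrix.vecMulVec_apply]
        · simp only [ha', if_false, hN, Matrix.add_apply, Matrix.sum_apply,
            Matrix.smul_apply, hV, Matrix.vecMulVec_apply, smul_eq_mul,
            Function.update_of_ne ha']
      rw [hrow]
      refine detAff (fun j => Function.update (u j) a 0) v L hndL _ ?_
      intro a' b
      rw [Matrix.updateRow_apply]
      split_ifs
      · exact hconst _ _
      · exact supported_mono hsub' (hB a' b)
    refine ⟨N.det, ∑ a, C (u i a) * (N.updateRow a fun b => C (v i b)).det,
      det_mem_subalgebra _ _ hNmem, ?_, affq, ?_, ?_⟩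
    · exact Subalgebra.sum_mem _ fun a _ =>
        Subalgebra.mul_mem _ (hconst _ _) (det_mem_subalgebra _ _ (hUmem a))
    · exact Aff_sum L _ _ fun a _ => Aff_C_mul L _ (affr a)
    · rw [hM, hdet]

/-- for rank-one matrices `A₁, ..., A_d ∈ M_m(ℂ)` with sum `A`, the
characteristic polynomial `p_A(z) = det(z·1_m - A)` equals the mixed characteristic
polynomial `μ[A₁,...,A_d](z)`. -/
theorem statement7 {m d : ℕ} (A : Fin d → Matrix (Fin m) (Fin m) ℂ)
    (hA : ∀ i, (A i).rank = 1) :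
    Matrix.charpoly (∑ i, A i) = mixedCharPoly A := by
  classical
  have hfact := fun i => rank_one_fact (A i) (hA i)
  choose uu vv huv using hfact
  set R' : Type := Polynomial ℂ with hR'
  set u : Fin d → Fin m → R' := fun i a => Polynomial.C (uu i a) with hu
  set v : Fin d → Fin m → R' := fun i b => Polynomial.C (vv i b) with hv
  set L : List (Fin d) := List.finRange d with hL
  set B : Matrix (Fin m) (Fin m) (MvPolynomial (Fin d) R') :=
    Matrix.of fun a b : Fin m =>
      (if a = b then (C Polynomial.X : MvPolynomial (Fin d) R') else 0) with hB
  set M : Matrix (Fin m) (Fin m) (MvPolynomial (Fin d) R') :=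
    Matrix.of (fun a b : Fin m =>
      (if a = b then (C Polynomial.X : MvPolynomial (Fin d) R') else 0) +
        ∑ i : Fin d, X i * C (Polynomial.C (A i a b))) with hM
  have hMeq : M = B + ∑ i ∈ L.toFinset,
      (X i : MvPolynomial (Fin d) R') • Matrix.vecMulVec (fun a => C (u i a))
        (fun b => C (v i b)) := by
    ext a b
    have hsum : ∀ i : Fin d, (C (Polynomial.C (A i a b)) : MvPolynomial (Fin d) R')
        = C (u i a) * C (v i b) := by
      intro i
      have h1 : A i a b = uu i a * vv i b := by rw [huv i]; rfl
      rw [h1, Polynomial.C_mul, _root_.map_mul]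
    simp only [hM, hB, Matrix.of_apply, Matrix.add_apply, Matrix.sum_apply,
      Matrix.smul_apply, Matrix.vecMulVec_apply, smul_eq_mul, hL,
      List.toFinset_finRange, hsum]
  have haff : Aff R' L M.det := by
    rw [hMeq]
    refine detAff u v L (List.nodup_finRange d) B ?_
    intro a b
    simp only [hB, Matrix.of_apply]
    split_ifs
    · rw [← MvPolynomial.algebraMap_eq]; exact Subalgebra.algebraMap_mem _ _
    · exact Subalgebra.zero_mem _
  have hkey := key_eval (R := R') (fun _ => 0) L (List.nodup_finRange d) M.det haff
  rw [mixedCharPoly]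
  have hofn : (List.ofFn fun i : Fin d =>
      (1 : Module.End (Polynomial ℂ) (MvPolynomial (Fin d) (Polynomial ℂ))) -
        (pderiv i).toLinearMap) = L.map (Topr R') := by
    rw [List.ofFn_eq_map]
    rfl
  rw [hofn]
  rw [show (Matrix.of fun a b : Fin m =>
        (if a = b then (C Polynomial.X : MvPolynomial (Fin d) (Polynomial ℂ)) else 0) +
          ∑ i : Fin d, X i * C (Polynomial.C (A i a b))) = M from rfl]
  rw [hkey]
  have hg : (fun j => if j ∈ L then (0 : R') - 1 else 0) = fun _ : Fin d => (-1 : R') := by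
    funext j
    simp [hL, List.mem_finRange]
  rw [hg]
  have hdet : eval (fun _ : Fin d => (-1 : R')) M.det
      = (M.map (eval fun _ : Fin d => (-1 : R'))).det :=
    RingHom.map_det _ M
  rw [hdet]
  have hch : M.map (eval fun _ : Fin d => (-1 : R')) = charmatrix (∑ i, A i) := by
    have hentry : ∀ a b, (M.map (eval fun _ : Fin d => (-1 : R'))) a b
        = (if a = b then Polynomial.X else 0) - Polynomial.C ((∑ i, A i) a b) := by
      intro a b
      simp only [Matrix.map_apply, hM, Matrix.of_apply, map_add, map_sum,
        _root_.map_mul, eval_X, eval_C, apply_ite (eval fun _ : Fin d => (-1 : R')),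
        map_zero, Matrix.sum_apply]
      rw [sub_eq_add_neg, ← Finset.sum_neg_distrib]
      simp [neg_one_mul]
    ext a b
    rw [hentry a b]
    by_cases hab : a = b
    · subst hab
      rw [if_pos rfl, charmatrix_apply_eq]
    · rw [if_neg hab, charmatrix_apply_ne _ _ _ hab]
      rw [zero_sub]
  rw [hch]
  rfl
end

section
/- Let Ω₁,...,Ω_d be finite probability spaces, let Ω be their product with the product probability, and for each i let A_i : Ω_i → M_m(ℂ) take values in the positive semidefinite matrices of rank 1 (so that, as random variables on Ω, the A_i are independent). Let A = Σ_{i=1}^d A_i. Then the coefficientwise expectation of the characteristic polynomial of A satisfies 𝔼 p_A(z) = μ[𝔼A₁,...,𝔼A_d](z), the mixed characteristic polynomial of the expectations 𝔼A_i. -/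
open MvPolynomial
open scoped ComplexOrder

noncomputable section MSSAux

variable {m d : ℕ}

/-- The operator `1 - ∂_i`. -/
def mssOp (d : ℕ) (i : Fin d) : Module.End (Polynomial ℂ) (MvPolynomial (Fin d) (Polynomial ℂ)) :=
  (1 : Module.End (Polynomial ℂ) (MvPolynomial (Fin d) (Polynomial ℂ))) -
    (pderiv i).toLinearMap

/-- The product of the operators `1 - ∂_i`. -/
def mssOps (d : ℕ) : Module.End (Polynomial ℂ) (MvPolynomial (Fin d) (Polynomial ℂ)) :=
  (List.ofFn fun i : Fin d =>
    (1 : Module.End (Polynomial ℂ) (MvPolynomial (Fin d) (Polynomial ℂ))) -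
      (pderiv i).toLinearMap).prod

lemma mssOps_eq (d : ℕ) : mssOps d = (List.ofFn (mssOp d)).prod := rfl

/-- determinant as a multilinear map in the rows -/
lemma mss_det_mlm {R : Type*} [CommRing R] (M : Matrix (Fin m) (Fin m) R) :
    M.det = (Matrix.detRowAlternating (n := Fin m) (R := R)).toMultilinearMap M := rfl

/-- The matrix `z·1 + ∑ z_i B_i` over `MvPolynomial (Fin d) (Polynomial ℂ)`. -/
def mssS (B : Fin d → Matrix (Fin m) (Fin m) ℂ) :
    Matrix (Fin m) (Fin m) (MvPolynomial (Fin d) (Polynomial ℂ)) :=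
  Matrix.of fun a b : Fin m =>
    (if a = b then (C Polynomial.X : MvPolynomial (Fin d) (Polynomial ℂ)) else 0) +
      ∑ i : Fin d, X i * C (Polynomial.C (B i a b))

/-- For a choice function `f` on rows, the matrix whose row `a` is either the diagonal
row (if `f a = none`) or the corresponding row of `B i` (if `f a = some i`). -/
def mssN (B : Fin d → Matrix (Fin m) (Fin m) ℂ) (f : Fin m → Option (Fin d)) :
    Matrix (Fin m) (Fin m) (Polynomial ℂ) :=
  Matrix.of fun a b : Fin m =>
    (f a).elim (if a = b then Polynomial.X else 0) fun i => Polynomial.C (B i a b)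

/-- The multiplicity finsupp of a choice function. -/
def mssCnt (f : Fin m → Option (Fin d)) : Fin d →₀ ℕ :=
  ∑ a : Fin m, (f a).elim 0 fun i => Finsupp.single i 1

def mssSgn (k : ℕ) : Polynomial ℂ := if k = 0 then 1 else if k = 1 then -1 else 0

def mssKap (f : Fin m → Option (Fin d)) : Polynomial ℂ :=
  ∏ i ∈ (mssCnt f).support, mssSgn (mssCnt f i)

/-- Row `a` of `mssS B`, as a sum over `Option (Fin d)`. -/
def mssRow (B : Fin d → Matrix (Fin m) (Fin m) ℂ) (a : Fin m) (o : Option (Fin d)) :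
    Fin m → MvPolynomial (Fin d) (Polynomial ℂ) :=
  o.elim (fun b => if a = b then (C Polynomial.X) else 0)
    fun i b => X i * C (Polynomial.C (B i a b))

lemma mss_prod_monomial (s : Finset (Fin m)) (g : Fin m → (Fin d →₀ ℕ)) :
    (∏ a ∈ s, (monomial (g a) (1 : Polynomial ℂ))) = monomial (∑ a ∈ s, g a) 1 := by
  classical
  induction s using Finset.induction_on with
  | empty => simp [monomial_zero']
  | insert a s h ih =>
      rw [Finset.prod_insert h, ih, Finset.sum_insert h, monomial_mul, one_mul]

lemma mss_rows (B : Fin d → Matrix (Fin m) (Fin m) ℂ) (a : Fin m) :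
    (mssS B) a = ∑ o : Option (Fin d), mssRow B a o := by
  funext b
  rw [Finset.sum_apply]
  rw [Fintype.sum_option]
  rfl

lemma mss_master (B : Fin d → Matrix (Fin m) (Fin m) ℂ) :
    (mssS B).det = ∑ f : Fin m → Option (Fin d), monomial (mssCnt f) ((mssN B f).det) := by
  classical
  have h2 : mssS B = fun a => ∑ o : Option (Fin d), mssRow B a o := funext (mss_rows B)
  rw [mss_det_mlm, h2]
  rw [(Matrix.detRowAlternating (n := Fin m)
    (R := MvPolynomial (Fin d) (Polynomial ℂ))).toMultilinearMap.map_sum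
    (fun a o => mssRow B a o)]
  refine Finset.sum_congr rfl fun f _ => ?_
  have h4 : (fun a => mssRow B a (f a)) =
      fun a => ((f a).elim (1 : MvPolynomial (Fin d) (Polynomial ℂ)) fun i => X i) •
        (fun b => (C : Polynomial ℂ →+* MvPolynomial (Fin d) (Polynomial ℂ)) ((mssN B f) a b)) := by
    funext a
    cases hfa : f a with
    | none =>
        funext b
        simp [mssRow, mssN, hfa, apply_ite (C : Polynomial ℂ →+* MvPolynomial (Fin d) (Polynomial ℂ))]
    | some i =>
        funext b
        simp [mssRow, mssN, hfa]
  rw [h4, (Matrix.detRowAlternating (n := Fin m)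
    (R := MvPolynomial (Fin d) (Polynomial ℂ))).toMultilinearMap.map_smul_univ]
  have h5 : (Matrix.detRowAlternating (n := Fin m)
      (R := MvPolynomial (Fin d) (Polynomial ℂ))).toMultilinearMap
      (fun a b => (C : Polynomial ℂ →+* MvPolynomial (Fin d) (Polynomial ℂ)) ((mssN B f) a b)) =
      C ((mssN B f).det) := by
    rw [(C : Polynomial ℂ →+* MvPolynomial (Fin d) (Polynomial ℂ)).map_det (mssN B f)]
    rfl
  rw [h5]
  have h6 : (∏ a : Fin m, ((f a).elim (1 : MvPolynomial (Fin d) (Polynomial ℂ)) fun i => X i)) =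
      monomial (mssCnt f) 1 := by
    have : ∀ a : Fin m, ((f a).elim (1 : MvPolynomial (Fin d) (Polynomial ℂ)) fun i => X i) =
        monomial ((f a).elim 0 fun i => Finsupp.single i 1) (1 : Polynomial ℂ) := by
      intro a
      cases hfa : f a with
      | none => simp [monomial_zero']
      | some i => rfl
    rw [Finset.prod_congr rfl fun a _ => this a, mss_prod_monomial]
    rfl
  rw [h6, smul_eq_mul, C_apply, monomial_mul, add_zero, one_mul]

/-- The operators `1 - ∂_i` pairwise commute. -/
lemma mss_commute (i j : Fin d) :
    Commute (mssOp d i) (mssOp d j) := by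
  classical
  have hcomm : ∀ p : MvPolynomial (Fin d) (Polynomial ℂ),
      (pderiv i).toLinearMap ((pderiv j).toLinearMap p) =
        (pderiv j).toLinearMap ((pderiv i).toLinearMap p) := by
    intro p
    show pderiv i (pderiv j p) = pderiv j (pderiv i p)
    induction p using MvPolynomial.induction_on' with
    | add p q hp hq => simp [hp, hq]
    | monomial s a =>
        by_cases h : i = j
        · subst h; rfl
        · have e1 : ((s - Finsupp.single j 1 : Fin d →₀ ℕ)) i = s i := by
            rw [Finsupp.tsub_apply, Finsupp.single_apply, if_neg (fun hh => h hh.symm),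
              Nat.sub_zero]
          have e2 : ((s - Finsupp.single i 1 : Fin d →₀ ℕ)) j = s j := by
            rw [Finsupp.tsub_apply, Finsupp.single_apply, if_neg h, Nat.sub_zero]
          simp only [pderiv_monomial, e1, e2]
          rw [tsub_right_comm, mul_right_comm]
  show mssOp d i * mssOp d j = mssOp d j * mssOp d i
  refine LinearMap.ext fun p => ?_
  simp only [mssOp, Module.End.mul_apply, LinearMap.sub_apply, Module.End.one_apply, map_sub]
  rw [hcomm p]
  abel

lemma mss_eval0_list (l : List (Fin d)) (hl : l.Nodup) (α : Fin d →₀ ℕ) (q : Polynomial ℂ) :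
    eval (fun _ : Fin d => (0 : Polynomial ℂ))
      (((l.map (mssOp d)).prod) (monomial α q)) =
      if α.support ⊆ l.toFinset then (∏ i ∈ α.support, mssSgn (α i)) * q else 0 := by
  classical
  induction l generalizing α q with
  | nil =>
      simp only [List.map_nil, List.prod_nil, Module.End.one_apply]
      rw [eval_monomial]
      by_cases h : α = 0
      · subst h
        simp
      · rw [if_neg (c := α.support ⊆ [].toFinset) (fun hsub => h (Finsupp.support_eq_empty.mp (Finset.subset_empty.mp hsub)))]
        obtain ⟨i0, hi0⟩ := Finsupp.support_nonempty_iff.mpr h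
        rw [Finsupp.prod,
          Finset.prod_eq_zero hi0 (zero_pow (Finsupp.mem_support_iff.mp hi0)), mul_zero]
  | cons i0 t ih =>
      obtain ⟨hi0t, ht⟩ := List.nodup_cons.mp hl
      have hpair : ((i0 :: t).map (mssOp d)).Pairwise Commute := by
        refine List.pairwise_of_forall_mem_list ?_
        intro x hx y hy
        obtain ⟨ix, _, rfl⟩ := List.mem_map.mp hx
        obtain ⟨iy, _, rfl⟩ := List.mem_map.mp hy
        exact mss_commute ix iy
      have hperm : ((i0 :: t).map (mssOp d)).Perm ((t.map (mssOp d)) ++ [mssOp d i0]) := by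
        rw [List.map_cons]
        exact (List.perm_append_singleton _ _).symm
      rw [List.Perm.prod_eq' hperm hpair, List.prod_append, List.prod_singleton,
        Module.End.mul_apply]
      have hgi0 : mssOp d i0 (monomial α q) =
          monomial α q - monomial (α - Finsupp.single i0 1) (q * (α i0 : Polynomial ℂ)) := by
        simp [mssOp, pderiv_monomial]
      rw [hgi0, map_sub, map_sub, ih ht, ih ht, List.toFinset_cons]
      have hnotmem : i0 ∉ t.toFinset := fun hmem => hi0t (List.mem_toFinset.mp hmem)
      rcases hk : α i0 with _ | k
      · -- α i0 = 0
        have h0 : i0 ∉ α.support := Finsupp.notMem_support_iff.mpr hk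
        simp [Finset.subset_insert_iff_of_notMem h0]
      · rcases k with _ | k
        · -- α i0 = 1
          have hk' : α i0 = 1 := by omega
          have hmem : i0 ∈ α.support := Finsupp.mem_support_iff.mpr (by rw [hk']; exact one_ne_zero)
          have hcond1 : ¬ (α.support ⊆ t.toFinset) := fun hsub => hnotmem (hsub hmem)
          rw [if_neg hcond1, zero_sub]
          have hβ : α - Finsupp.single i0 1 = Finsupp.erase i0 α := by
            ext j
            by_cases hj : j = i0
            · subst hj
              rw [Finsupp.tsub_apply, Finsupp.single_eq_same, Finsupp.erase_same, hk']
              omega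
            · rw [Finsupp.tsub_apply, Finsupp.single_apply, if_neg (Ne.symm hj),
                Finsupp.erase_ne hj, Nat.sub_zero]
          have hsupβ : (α - Finsupp.single i0 1).support = α.support.erase i0 := by
            rw [hβ, Finsupp.support_erase]
          simp only [Finset.subset_insert_iff, ← hsupβ]
          simp only [hk', Nat.cast_add, Nat.cast_zero, Nat.cast_one, zero_add, mul_one]
          by_cases hcond : (α - Finsupp.single i0 1).support ⊆ t.toFinset
          · rw [if_pos hcond, if_pos hcond]
            have hα : α.support = insert i0 ((α - Finsupp.single i0 1).support) := by
              rw [hsupβ, Finset.insert_erase hmem]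
            rw [hα, Finset.prod_insert (by rw [hsupβ]; exact Finset.notMem_erase _ _), hk']
            have heq : (∏ i ∈ (α - Finsupp.single i0 1).support, mssSgn (α i)) =
                ∏ i ∈ (α - Finsupp.single i0 1).support,
                  mssSgn ((α - Finsupp.single i0 1 : Fin d →₀ ℕ) i) := by
              refine Finset.prod_congr rfl fun i hi => ?_
              have hine : i ≠ i0 := by
                rw [hsupβ] at hi
                exact Finset.ne_of_mem_erase hi
              rw [hβ, Finsupp.erase_ne hine]
            rw [← heq]
            have hsg : mssSgn 1 = -1 := by simp [mssSgn]
            rw [hsg]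
            ring
          · rw [if_neg hcond, if_neg hcond, neg_zero]
        · -- α i0 = k + 2
          have hmem : i0 ∈ α.support := Finsupp.mem_support_iff.mpr (by omega)
          have hcond1 : ¬ (α.support ⊆ t.toFinset) := fun hsub => hnotmem (hsub hmem)
          have hmemβ : i0 ∈ (α - Finsupp.single i0 1).support := by
            refine Finsupp.mem_support_iff.mpr ?_
            rw [Finsupp.tsub_apply, Finsupp.single_eq_same]
            omega
          have hcond2 : ¬ ((α - Finsupp.single i0 1).support ⊆ t.toFinset) :=
            fun hsub => hnotmem (hsub hmemβ)
          rw [if_neg hcond1, if_neg hcond2, sub_zero]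
          by_cases hcond : α.support ⊆ insert i0 t.toFinset
          · rw [if_pos hcond]
            have hz : (∏ i ∈ α.support, mssSgn (α i)) = 0 := by
              refine Finset.prod_eq_zero hmem ?_
              have hne0 : α i0 ≠ 0 := by omega
              have hne1 : α i0 ≠ 1 := by omega
              simp [mssSgn, hne0, hne1]
            rw [hz, zero_mul]
          · rw [if_neg hcond]

lemma mss_lam (α : Fin d →₀ ℕ) (q : Polynomial ℂ) :
    eval (fun _ : Fin d => (0 : Polynomial ℂ)) (mssOps d (monomial α q)) =
      (∏ i ∈ α.support, mssSgn (α i)) * q := by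
  have h := mss_eval0_list (List.finRange d) (List.nodup_finRange d) α q
  rw [List.toFinset_finRange, if_pos (Finset.subset_univ _)] at h
  rw [mssOps_eq, List.ofFn_eq_map]
  exact h

lemma mss_mixed (B : Fin d → Matrix (Fin m) (Fin m) ℂ) :
    mixedCharPoly B = ∑ f : Fin m → Option (Fin d), mssKap f * (mssN B f).det := by
  have h0 : mixedCharPoly B =
      eval (fun _ : Fin d => (0 : Polynomial ℂ)) (mssOps d ((mssS B).det)) := rfl
  rw [h0, mss_master, map_sum, map_sum]
  exact Finset.sum_congr rfl fun f _ => mss_lam _ _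

lemma mss_charpoly (B : Fin d → Matrix (Fin m) (Fin m) ℂ) :
    (∑ i, B i).charpoly =
      ∑ f : Fin m → Option (Fin d),
        ((mssCnt f).prod fun _ k => (-1 : Polynomial ℂ) ^ k) * (mssN B f).det := by
  classical
  have h := congrArg (eval (fun _ : Fin d => (-1 : Polynomial ℂ))) (mss_master B)
  rw [map_sum] at h
  have hL : eval (fun _ : Fin d => (-1 : Polynomial ℂ)) ((mssS B).det) =
      (∑ i, B i).charpoly := by
    rw [(eval (fun _ : Fin d => (-1 : Polynomial ℂ))).map_det]
    have : (eval (fun _ : Fin d => (-1 : Polynomial ℂ))).mapMatrix (mssS B) =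
        Matrix.charmatrix (∑ i, B i) := by
      refine Matrix.ext fun a b => ?_
      rw [RingHom.mapMatrix_apply, Matrix.map_apply, Matrix.charmatrix_apply]
      simp only [mssS, Matrix.of_apply]
      rw [map_add, map_sum]
      have h1 : eval (fun _ : Fin d => (-1 : Polynomial ℂ))
          (if a = b then (C Polynomial.X : MvPolynomial (Fin d) (Polynomial ℂ)) else 0) =
          Matrix.diagonal (fun _ : Fin m => (Polynomial.X : Polynomial ℂ)) a b := by
        rw [Matrix.diagonal_apply, apply_ite (eval (fun _ : Fin d => (-1 : Polynomial ℂ)))]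
        simp
      have h2 : ∀ i : Fin d, eval (fun _ : Fin d => (-1 : Polynomial ℂ))
          (X i * C (Polynomial.C (B i a b))) = -Polynomial.C (B i a b) := by
        intro i
        rw [map_mul, eval_X, eval_C]
        ring
      rw [h1, Finset.sum_congr rfl fun i _ => h2 i, Finset.sum_neg_distrib,
        Matrix.sum_apply, map_sum, sub_eq_add_neg]
    rw [this]
    rfl
  rw [hL] at h
  rw [h]
  refine Finset.sum_congr rfl fun f _ => ?_
  rw [eval_monomial, mul_comm]

lemma mss_cnt_apply (f : Fin m → Option (Fin d)) (i : Fin d) :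
    mssCnt f i = (Finset.univ.filter fun a => f a = some i).card := by
  classical
  rw [mssCnt, Finsupp.finset_sum_apply, Finset.card_filter]
  refine Finset.sum_congr rfl fun a _ => ?_
  cases hfa : f a with
  | none => simp [hfa]
  | some j =>
      simp only [hfa, Option.elim, Finsupp.single_apply, Option.some_inj]

lemma mss_two (f : Fin m → Option (Fin d)) (i : Fin d) (h : 2 ≤ mssCnt f i) :
    ∃ a a', a ≠ a' ∧ f a = some i ∧ f a' = some i := by
  classical
  rw [mss_cnt_apply] at h
  obtain ⟨a, ha, a', ha', hne⟩ := Finset.one_lt_card.mp h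
  exact ⟨a, a', hne, (Finset.mem_filter.mp ha).2, (Finset.mem_filter.mp ha').2⟩

lemma mss_rows_dep (M : Matrix (Fin m) (Fin m) ℂ) (h : M.rank ≤ 1) :
    ∃ v : Fin m → ℂ, ∀ a, ∃ c : ℂ, M a = c • v := by
  classical
  have h1 : Module.finrank ℂ (Submodule.span ℂ (Set.range M)) ≤ 1 := by
    rw [show Set.range M = Set.range M.row from rfl, ← Matrix.rank_eq_finrank_span_row]
    exact h
  haveI : FiniteDimensional ℂ (Submodule.span ℂ (Set.range M)) :=
    FiniteDimensional.span_of_finite ℂ (Set.finite_range M)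
  obtain ⟨v₀, hv⟩ := finrank_le_one_iff.mp h1
  refine ⟨(v₀ : Fin m → ℂ), fun a => ?_⟩
  obtain ⟨c, hc⟩ := hv ⟨M a, Submodule.subset_span (Set.mem_range_self a)⟩
  refine ⟨c, ?_⟩
  have h2 := congrArg (Subtype.val) hc
  rw [Submodule.coe_smul] at h2
  exact h2.symm

lemma mss_upd_comm (M : Matrix (Fin m) (Fin m) (Polynomial ℂ)) {a a' : Fin m} (h : a ≠ a')
    (r r' : Fin m → Polynomial ℂ) :
    (M.updateRow a r).updateRow a' r' = (M.updateRow a' r').updateRow a r := by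
  refine Matrix.ext fun x b => ?_
  by_cases hx : x = a
  · subst hx
    rw [Matrix.updateRow_ne h, Matrix.updateRow_self, Matrix.updateRow_self]
  · by_cases hx' : x = a'
    · subst hx'
      rw [Matrix.updateRow_self, Matrix.updateRow_ne (Ne.symm h), Matrix.updateRow_self]
    · rw [Matrix.updateRow_ne hx', Matrix.updateRow_ne hx, Matrix.updateRow_ne hx,
        Matrix.updateRow_ne hx']

lemma mss_det_two_rows (M : Matrix (Fin m) (Fin m) (Polynomial ℂ)) {a a' : Fin m} (h : a ≠ a')
    (r : Fin m → Polynomial ℂ) (ca ca' : Polynomial ℂ)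
    (ha : M a = ca • r) (ha' : M a' = ca' • r) : M.det = 0 := by
  have h1 : M = (M.updateRow a (ca • r)).updateRow a' (ca' • r) := by
    rw [← ha, ← ha', Matrix.updateRow_eq_self, Matrix.updateRow_eq_self]
  rw [h1, Matrix.det_updateRow_smul, mss_upd_comm _ h, Matrix.det_updateRow_smul]
  have h2 : ((M.updateRow a' r).updateRow a r).det = 0 := by
    refine Matrix.det_zero_of_row_eq h ?_
    rw [Matrix.updateRow_self, Matrix.updateRow_ne (Ne.symm h), Matrix.updateRow_self]
  rw [h2, mul_zero, mul_zero]

lemma mss_det_zero (B : Fin d → Matrix (Fin m) (Fin m) ℂ) (f : Fin m → Option (Fin d))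
    (i : Fin d) (hr : (B i).rank ≤ 1) (h2 : 2 ≤ mssCnt f i) : (mssN B f).det = 0 := by
  obtain ⟨a, a', hne, ha, ha'⟩ := mss_two f i h2
  obtain ⟨v, hv⟩ := mss_rows_dep (B i) hr
  obtain ⟨c, hc⟩ := hv a
  obtain ⟨c', hc'⟩ := hv a'
  refine mss_det_two_rows (mssN B f) hne (fun b => Polynomial.C (v b))
    (Polynomial.C c) (Polynomial.C c') ?_ ?_
  · funext b
    show (f a).elim _ _ = _
    rw [ha]
    show Polynomial.C (B i a b) = _
    rw [hc]
    show Polynomial.C (c * v b) = _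
    rw [map_mul]
    rfl
  · funext b
    show (f a').elim _ _ = _
    rw [ha']
    show Polynomial.C (B i a' b) = _
    rw [hc']
    show Polynomial.C (c' * v b) = _
    rw [map_mul]
    rfl

lemma mss_eps_kap (B : Fin d → Matrix (Fin m) (Fin m) ℂ) (hr : ∀ i, (B i).rank ≤ 1)
    (f : Fin m → Option (Fin d)) :
    ((mssCnt f).prod fun _ k => (-1 : Polynomial ℂ) ^ k) * (mssN B f).det =
      mssKap f * (mssN B f).det := by
  by_cases hall : ∀ i ∈ (mssCnt f).support, mssCnt f i ≤ 1
  · congr 1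
    rw [mssKap, Finsupp.prod]
    refine Finset.prod_congr rfl fun i hi => ?_
    have h1 : mssCnt f i = 1 :=
      le_antisymm (hall i hi) (Nat.one_le_iff_ne_zero.mpr (Finsupp.mem_support_iff.mp hi))
    rw [h1]
    simp [mssSgn]
  · push_neg at hall
    obtain ⟨i, _, hi2⟩ := hall
    have : (mssN B f).det = 0 := mss_det_zero B f i (hr i) hi2
    rw [this, mul_zero, mul_zero]

lemma mss_kap_zero (f : Fin m → Option (Fin d)) (i : Fin d) (h2 : 2 ≤ mssCnt f i) :
    mssKap f = 0 := by
  have hmem : i ∈ (mssCnt f).support := Finsupp.mem_support_iff.mpr (by omega)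
  refine Finset.prod_eq_zero hmem ?_
  have : mssCnt f i ≠ 0 := by omega
  have h1 : mssCnt f i ≠ 1 := by omega
  simp [mssSgn, this, h1]

end MSSAux

section MSSProb

variable {m d : ℕ} {Ω : Fin d → Type} [∀ i, Fintype (Ω i)]

/-- Single-coordinate averaging: the determinant of `mssN` is affine in each slot that is
used by at most one row. -/
lemma mss_SC (f : Fin m → Option (Fin d))
    (hf : ∀ i a a', f a = some i → f a' = some i → a = a') (i : Fin d)
    {κ : Type} [Fintype κ] (W' : κ → ℂ) (hW' : ∑ x, W' x = 1)
    (M : κ → Matrix (Fin m) (Fin m) ℂ) (B : Fin d → Matrix (Fin m) (Fin m) ℂ) :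
    ∑ x, W' x • (mssN (Function.update B i (M x)) f).det =
      (mssN (Function.update B i (∑ x, W' x • M x)) f).det := by
  classical
  by_cases hex : ∃ a0, f a0 = some i
  · obtain ⟨a0, ha0⟩ := hex
    have key : ∀ Mi : Matrix (Fin m) (Fin m) ℂ, mssN (Function.update B i Mi) f =
        (mssN B f).updateRow a0 (fun b => Polynomial.C (Mi a0 b)) := by
      intro Mi
      refine Matrix.ext fun a b => ?_
      by_cases ha : a = a0
      · subst ha
        rw [Matrix.updateRow_self]
        show (f a).elim _ _ = _
        rw [ha0]
        show Polynomial.C ((Function.update B i Mi) i a b) = _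
        rw [Function.update_self]
      · rw [Matrix.updateRow_ne ha]
        show (f a).elim _ _ = (f a).elim _ _
        cases hfa : f a with
        | none => rfl
        | some j =>
            have hji : j ≠ i := fun hj => ha (hf i a a0 (hj ▸ hfa) ha0)
            show Polynomial.C ((Function.update B i Mi) j a b) = Polynomial.C (B j a b)
            rw [Function.update_of_ne hji]
    have hrow : (fun b => Polynomial.C ((∑ x, W' x • M x) a0 b)) =
        ∑ x, Polynomial.C (W' x) • (fun b => Polynomial.C (M x a0 b)) := by
      funext b
      simp only [Matrix.sum_apply, Matrix.smul_apply, smul_eq_mul, map_sum, map_mul,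
        Finset.sum_apply, Pi.smul_apply]
    have hupd : ∀ r : Fin m → Polynomial ℂ,
        (mssN B f).updateRow a0 r = Function.update (mssN B f) a0 r := fun r => rfl
    rw [key, hrow, mss_det_mlm, hupd]
    rw [(Matrix.detRowAlternating (n := Fin m)
      (R := Polynomial ℂ)).toMultilinearMap.map_update_sum Finset.univ a0
      (fun x => Polynomial.C (W' x) • (fun b => Polynomial.C (M x a0 b))) (mssN B f)]
    refine Finset.sum_congr rfl fun x _ => ?_
    rw [key, mss_det_mlm, hupd]
    rw [(Matrix.detRowAlternating (n := Fin m)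
      (R := Polynomial ℂ)).toMultilinearMap.map_update_smul (mssN B f) a0
      (Polynomial.C (W' x)) (fun b => Polynomial.C (M x a0 b))]
    rw [smul_eq_mul, ← Polynomial.smul_eq_C_mul]
  · push_neg at hex
    have key0 : ∀ Mi : Matrix (Fin m) (Fin m) ℂ, mssN (Function.update B i Mi) f = mssN B f := by
      intro Mi
      refine Matrix.ext fun a b => ?_
      show (f a).elim _ _ = (f a).elim _ _
      cases hfa : f a with
      | none => rfl
      | some j =>
          have hji : j ≠ i := fun hj => hex a (hj ▸ hfa)
          show Polynomial.C ((Function.update B i Mi) j a b) = Polynomial.C (B j a b)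
          rw [Function.update_of_ne hji]
    rw [key0]
    rw [Finset.sum_congr rfl fun x _ => by rw [key0 (M x)]]
    rw [← Finset.sum_smul, hW', one_smul]

/-- Fubini-type lemma for averaging over one coordinate of a product space. -/
lemma mss_FUB {V : Type*} [AddCommGroup V] [Module ℂ V]
    (W : ∀ i, Ω i → ℂ) (hW1 : ∀ i, ∑ x, W i x = 1) (i : Fin d)
    (F : (∀ j, Ω j) → V) :
    ∑ ω : ∀ j, Ω j, (∏ j, W j (ω j)) • (∑ x, W i x • F (Function.update ω i x)) =
      ∑ ω : ∀ j, Ω j, (∏ j, W j (ω j)) • F ω := by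
  classical
  set e := Equiv.piSplitAt i Ω with he
  have hsplit : ∀ ω : ∀ j, Ω j, (∏ j, W j (ω j)) =
      W i (ω i) * ∏ j : { j // j ≠ i }, W j (ω j) := by
    intro ω
    rw [Finset.prod_eq_mul_prod_sdiff_singleton_of_mem (Finset.mem_univ i) (fun j => W j (ω j))]
    congr 1
    refine Finset.prod_subtype _ (fun x => ?_) _
    simp [Finset.mem_sdiff, Ne]
  have hsymm_apply_ne : ∀ (y : Ω i) (ρ : ∀ j : { j // j ≠ i }, Ω j) (j : { j // j ≠ i }),
      e.symm (y, ρ) (j : Fin d) = ρ j := by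
    intro y ρ j
    rw [he, Equiv.piSplitAt_symm_apply, dif_neg j.2]
  have hsymm_apply_i : ∀ (y : Ω i) (ρ : ∀ j : { j // j ≠ i }, Ω j), e.symm (y, ρ) i = y := by
    intro y ρ
    rw [he, Equiv.piSplitAt_symm_apply, dif_pos rfl]
  have hupd : ∀ (y x : Ω i) (ρ : ∀ j : { j // j ≠ i }, Ω j),
      Function.update (e.symm (y, ρ)) i x = e.symm (x, ρ) := by
    intro y x ρ
    funext j
    by_cases hj : j = i
    · subst hj
      rw [Function.update_self, hsymm_apply_i]
    · rw [Function.update_of_ne hj, he, Equiv.piSplitAt_symm_apply, dif_neg hj,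
        Equiv.piSplitAt_symm_apply, dif_neg hj]
  set P : (∀ j : { j // j ≠ i }, Ω j) → ℂ := fun ρ => ∏ j : { j // j ≠ i }, W j (ρ j) with hP
  have hwt : ∀ (y : Ω i) (ρ : ∀ j : { j // j ≠ i }, Ω j),
      (∏ j, W j ((e.symm (y, ρ)) j)) = W i y * P ρ := by
    intro y ρ
    rw [hsplit, hsymm_apply_i]
    congr 1
    exact Finset.prod_congr rfl fun j _ => by rw [hsymm_apply_ne]
  have hT : ∀ G : (∀ j, Ω j) → V, ∑ ω : ∀ j, Ω j, G ω =
      ∑ y : Ω i, ∑ ρ : ∀ j : { j // j ≠ i }, Ω j, G (e.symm (y, ρ)) := by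
    intro G
    rw [← Equiv.sum_comp e.symm G, Fintype.sum_prod_type]
  rw [hT, hT (fun ω => (∏ j, W j (ω j)) • F ω)]
  have hRHS : ∀ y ρ, (∏ j, W j ((e.symm (y, ρ)) j)) • F (e.symm (y, ρ)) =
      (W i y * P ρ) • F (e.symm (y, ρ)) := fun y ρ => by rw [hwt]
  calc
    ∑ y : Ω i, ∑ ρ : ∀ j : { j // j ≠ i }, Ω j,
        (∏ j, W j ((e.symm (y, ρ)) j)) • (∑ x, W i x • F (Function.update (e.symm (y, ρ)) i x)) =
        ∑ y : Ω i, W i y • (∑ ρ : ∀ j : { j // j ≠ i }, Ω j,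
          ∑ x : Ω i, (W i x * P ρ) • F (e.symm (x, ρ))) := by
          refine Finset.sum_congr rfl fun y _ => ?_
          rw [Finset.smul_sum]
          refine Finset.sum_congr rfl fun ρ _ => ?_
          rw [hwt, Finset.smul_sum, Finset.smul_sum]
          refine Finset.sum_congr rfl fun x _ => ?_
          rw [hupd]
          rw [smul_smul, smul_smul]
          congr 1
          ring
    _ = ∑ ρ : ∀ j : { j // j ≠ i }, Ω j, ∑ x : Ω i, (W i x * P ρ) • F (e.symm (x, ρ)) := by
          rw [← Finset.sum_smul, hW1 i, one_smul]
    _ = ∑ y : Ω i, ∑ ρ : ∀ j : { j // j ≠ i }, Ω j,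
          (∏ j, W j ((e.symm (y, ρ)) j)) • F (e.symm (y, ρ)) := by
          rw [Finset.sum_comm]
          refine Finset.sum_congr rfl fun y _ => Finset.sum_congr rfl fun ρ _ => ?_
          rw [hwt]

/-- Hybrid induction: averaging the coordinates in `s = tᶜ`. -/
lemma mss_hyb (W : ∀ i, Ω i → ℂ) (hW1 : ∀ i, ∑ x, W i x = 1)
    (A : ∀ i, Ω i → Matrix (Fin m) (Fin m) ℂ)
    (f : Fin m → Option (Fin d))
    (hf : ∀ i a a', f a = some i → f a' = some i → a = a') :
    ∀ (t s : Finset (Fin d)), s = tᶜ →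
      (∑ ω : ∀ i, Ω i, (∏ j, W j (ω j)) •
        (mssN (fun i => if i ∈ s then (∑ x, W i x • A i x) else A i (ω i)) f).det) =
      (mssN (fun i => ∑ x, W i x • A i x) f).det := by
  classical
  intro t
  induction t using Finset.induction_on with
  | empty =>
      intro s hs
      rw [hs, Finset.compl_empty]
      have : ∀ ω : ∀ i, Ω i, (fun i => if i ∈ (Finset.univ : Finset (Fin d)) then
          (∑ x, W i x • A i x) else A i (ω i)) = fun i => ∑ x, W i x • A i x := by
        intro ω
        funext i
        rw [if_pos (Finset.mem_univ i)]
      rw [Finset.sum_congr rfl fun ω _ => by rw [this ω]]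
      rw [← Finset.sum_smul]
      have hsum1 : (∑ ω : ∀ i, Ω i, ∏ j, W j (ω j)) = 1 := by
        rw [← Fintype.prod_sum (fun j x => W j x)]
        rw [Finset.prod_congr rfl fun j _ => hW1 j]
        exact Finset.prod_const_one
      rw [hsum1, one_smul]
  | @insert i t hit IH =>
      intro s hs
      have his : i ∉ s := by
        rw [hs, Finset.compl_insert]
        exact Finset.notMem_erase _ _
      have hs' : insert i s = tᶜ := by
        rw [hs, Finset.compl_insert, Finset.insert_erase (Finset.mem_compl.mpr hit)]
      have hIH := IH (insert i s) hs'
      rw [← hIH]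
      have key : ∀ ω : ∀ i, Ω i,
          (mssN (fun j => if j ∈ insert i s then (∑ x, W j x • A j x) else A j (ω j)) f).det =
          ∑ x : Ω i, W i x •
            (mssN (fun j => if j ∈ s then (∑ y, W j y • A j y) else A j ((Function.update ω i x) j)) f).det := by
        intro ω
        have eq1 : (fun j => if j ∈ insert i s then (∑ x, W j x • A j x) else A j (ω j)) =
            Function.update (fun j => if j ∈ s then (∑ x, W j x • A j x) else A j (ω j)) i
              (∑ x, W i x • A i x) := by
          funext j
          by_cases hj : j = i
          · subst hj
            rw [Function.update_self, if_pos (Finset.mem_insert_self _ _)]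
          · rw [Function.update_of_ne hj]
            by_cases hjs : j ∈ s
            · rw [if_pos hjs, if_pos (Finset.mem_insert_of_mem hjs)]
            · rw [if_neg hjs, if_neg (fun hmem => hjs ((Finset.mem_insert.mp hmem).resolve_left hj))]
        have eq2 : ∀ x : Ω i,
            Function.update (fun j => if j ∈ s then (∑ y, W j y • A j y) else A j (ω j)) i (A i x) =
            fun j => if j ∈ s then (∑ y, W j y • A j y) else A j ((Function.update ω i x) j) := by
          intro x
          funext j
          by_cases hj : j = i
          · subst hj
            rw [Function.update_self, if_neg his, Function.update_self]
          · rw [Function.update_of_ne hj]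
            by_cases hjs : j ∈ s
            · rw [if_pos hjs, if_pos hjs]
            · rw [if_neg hjs, if_neg hjs, Function.update_of_ne hj]
        rw [eq1]
        rw [← mss_SC f hf i (W i) (hW1 i) (A i)
          (fun j => if j ∈ s then (∑ x, W j x • A j x) else A j (ω j))]
        exact Finset.sum_congr rfl fun x _ => by rw [eq2 x]
      have h2 : ∑ ω : ∀ i, Ω i, (∏ j, W j (ω j)) •
            (mssN (fun j => if j ∈ insert i s then (∑ x, W j x • A j x) else A j (ω j)) f).det =
          ∑ ω : ∀ i, Ω i, (∏ j, W j (ω j)) • (∑ x : Ω i, W i x •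
            (mssN (fun j => if j ∈ s then (∑ y, W j y • A j y)
              else A j ((Function.update ω i x) j)) f).det) :=
        Finset.sum_congr rfl fun ω _ => by rw [key ω]
      rw [h2]
      exact (mss_FUB W hW1 i (fun ω =>
        (mssN (fun j => if j ∈ s then (∑ y, W j y • A j y) else A j (ω j)) f).det)).symm

lemma mss_claimC (W : ∀ i, Ω i → ℂ) (hW1 : ∀ i, ∑ x, W i x = 1)
    (A : ∀ i, Ω i → Matrix (Fin m) (Fin m) ℂ)
    (f : Fin m → Option (Fin d))
    (hf : ∀ i a a', f a = some i → f a' = some i → a = a') :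
    (∑ ω : ∀ i, Ω i, (∏ j, W j (ω j)) • (mssN (fun i => A i (ω i)) f).det) =
      (mssN (fun i => ∑ x, W i x • A i x) f).det := by
  classical
  have h := mss_hyb W hW1 A f hf Finset.univ ∅ (by rw [Finset.compl_univ])
  rw [← h]
  refine Finset.sum_congr rfl fun ω _ => ?_
  congr 1

end MSSProb

/-- let `Ω₁, ..., Ω_d` be finite probability spaces (`Ω i` with weights `w i`
summing to `1`), and `A i : Ω i → M_m(ℂ)` rank-one positive-semidefinite-valued maps, viewed
as independent random matrices on the product `Ω = ∀ i, Ω i` with product probability.  With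
`A = ∑ i, A i`, the coefficientwise expectation of the characteristic polynomial of `A` is the
mixed characteristic polynomial of the (entrywise) expectations `𝔼 A_i`. -/
theorem statement9 {m d : ℕ} (Ω : Fin d → Type) [∀ i, Fintype (Ω i)]
    (w : ∀ i, Ω i → ℝ) (hw0 : ∀ i ω, 0 ≤ w i ω) (hw1 : ∀ i, ∑ ω : Ω i, w i ω = 1)
    (A : ∀ i, Ω i → Matrix (Fin m) (Fin m) ℂ)
    (hpsd : ∀ i ω, (A i ω).PosSemidef) (hrk : ∀ i ω, (A i ω).rank = 1) :
    ∑ ω : ∀ i, Ω i, (∏ i, w i (ω i)) • Matrix.charpoly (∑ i, A i (ω i)) =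
      mixedCharPoly (fun i => ∑ ω : Ω i, w i ω • A i ω) := by
  classical
  set W : ∀ i, Ω i → ℂ := fun i x => ((w i x : ℝ) : ℂ) with hW
  have hW1 : ∀ i, ∑ x, W i x = 1 := by
    intro i
    rw [hW]
    rw [← Complex.ofReal_sum, hw1 i, Complex.ofReal_one]
  have hsmulmat : ∀ (i : Fin d) (x : Ω i), w i x • A i x = W i x • A i x := by
    intro i x
    ext a b
    rw [Matrix.smul_apply, Matrix.smul_apply, hW, Complex.real_smul, smul_eq_mul]
  have hEA : (fun i => ∑ x : Ω i, w i x • A i x) = fun i => ∑ x : Ω i, W i x • A i x := by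
    funext i
    exact Finset.sum_congr rfl fun x _ => hsmulmat i x
  rw [hEA, mss_mixed]
  -- rewrite the LHS
  have hsmulpoly : ∀ (r : ℝ) (p : Polynomial ℂ), r • p = ((r : ℂ)) • p := by
    intro r p
    ext n
    rw [Polynomial.coeff_smul, Polynomial.coeff_smul, Complex.real_smul, smul_eq_mul]
  have hLHS1 : ∀ ω : ∀ i, Ω i, (∏ i, w i (ω i)) • Matrix.charpoly (∑ i, A i (ω i)) =
      (∏ i, W i (ω i)) • ∑ f : Fin m → Option (Fin d),
        mssKap f * (mssN (fun i => A i (ω i)) f).det := by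
    intro ω
    rw [hsmulpoly, Complex.ofReal_prod]
    congr 1
    rw [mss_charpoly (fun i => A i (ω i))]
    refine Finset.sum_congr rfl fun f _ => ?_
    exact mss_eps_kap (fun i => A i (ω i)) (fun i => le_of_eq (hrk i (ω i))) f
  rw [Finset.sum_congr rfl fun ω _ => hLHS1 ω]
  -- swap sums
  have hswap : ∑ ω : ∀ i, Ω i, (∏ i, W i (ω i)) • ∑ f : Fin m → Option (Fin d),
      mssKap f * (mssN (fun i => A i (ω i)) f).det =
      ∑ f : Fin m → Option (Fin d), mssKap f *
        ∑ ω : ∀ i, Ω i, (∏ i, W i (ω i)) • (mssN (fun i => A i (ω i)) f).det := by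
    rw [Finset.sum_congr rfl fun ω _ => Finset.smul_sum]
    rw [Finset.sum_comm]
    refine Finset.sum_congr rfl fun f _ => ?_
    rw [Finset.mul_sum]
    refine Finset.sum_congr rfl fun ω _ => ?_
    rw [mul_smul_comm]
  rw [hswap]
  refine Finset.sum_congr rfl fun f _ => ?_
  by_cases hgood : ∀ i, mssCnt f i ≤ 1
  · have hf : ∀ i a a', f a = some i → f a' = some i → a = a' := by
      intro i a a' ha ha'
      by_contra hne
      have h2 : 2 ≤ mssCnt f i := by
        rw [mss_cnt_apply]
        refine Finset.one_lt_card.mpr ?_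
        exact ⟨a, Finset.mem_filter.mpr ⟨Finset.mem_univ _, ha⟩,
          a', Finset.mem_filter.mpr ⟨Finset.mem_univ _, ha'⟩, hne⟩
      have := hgood i
      omega
    rw [mss_claimC W hW1 A f hf]
  · push_neg at hgood
    obtain ⟨i, hi⟩ := hgood
    rw [mss_kap_zero f i hi, zero_mul, zero_mul]
end
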